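/- arXiv:2008.07797 — 4 statements merged into one kernel-verified Lean document; each statement's English description precedes it below -/
import Mathlib

section
/- Let N be a rooted phylogenetic network on a finite set X. Then the normalisation Ñ of N equals N (as a directed graph, with the same vertex set and arc set) if and only if N is a normal network. -/
/-!
Formalisation framework for rooted phylogenetic networks.

A network is represented as a directed graph on an ambient vertex type `V`:
a vertex set `verts`, a root vertex `root`, and an arc relation `arc`.
-/

structure Net (V : Type*) where
  verts : Set V
  root : V
  arc : V → V → Prop

namespace Net

variable {V : Type*} {W : Type*}

/-- `N.reach u v` means there is a (possibly empty) directed path from `u` to `v`. -/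
def reach (N : Net V) : V → V → Prop := Relation.ReflTransGen N.arc

/-- The in-degree of a vertex. -/
noncomputable def inDeg (N : Net V) (v : V) : ℕ := {u | N.arc u v}.ncard

/-- The out-degree of a vertex. -/
noncomputable def outDeg (N : Net V) (v : V) : ℕ := {w | N.arc v w}.ncard

/-- The leaves of `N`: the vertices of out-degree 0. -/
def leaves (N : Net V) : Set V := {v ∈ N.verts | N.outDeg v = 0}

/-- `N.IsPathFrom u v l` : the list `l` is a directed path in `N` from `u` to `v`
(consecutive entries joined by arcs; a one-element list is the empty path). -/
def IsPathFrom (N : Net V) (u v : V) (l : List V) : Prop :=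
  l.Chain' N.arc ∧ l.head? = some u ∧ l.getLast? = some v

/-- A vertex is visible if some leaf is such that every directed path from the
root to that leaf passes through the vertex. -/
def Visible (N : Net V) (x : V) : Prop :=
  x ∈ N.verts ∧ ∃ y ∈ N.leaves, ∀ l : List V, N.IsPathFrom N.root y l → x ∈ l

/-- A subdividing vertex is one of in-degree 1 and out-degree 1. -/
def Subdividing (N : Net V) (v : V) : Prop := N.inDeg v = 1 ∧ N.outDeg v = 1

/-- The digraph `Cov(N)` on the visible vertices of `N`: an arc `(u,v)` whenever
`u ≠ v`, `u →_N v`, and no visible vertex lies strictly between `u` and `v`. -/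
def cov (N : Net V) : Net V where
  verts := {v | N.Visible v}
  root := N.root
  arc u v := N.Visible u ∧ N.Visible v ∧ u ≠ v ∧ N.reach u v ∧
    ¬ ∃ w, N.Visible w ∧ w ≠ u ∧ w ≠ v ∧ N.reach u w ∧ N.reach w v

/-- The normalisation `Ñ` of `N`: obtained from `Cov(N)` by suppressing every
subdividing vertex.  Its vertices are the visible vertices of `N` that are not
subdividing in `Cov(N)`, with an arc `(u,v)` whenever `Cov(N)` has a directed path
from `u` to `v` (of length at least one) all of whose interior vertices are
subdividing in `Cov(N)`. -/
def normalise (N : Net V) : Net V where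
  verts := {v | N.Visible v ∧ ¬ N.cov.Subdividing v}
  root := N.root
  arc u v := (N.Visible u ∧ ¬ N.cov.Subdividing u) ∧ (N.Visible v ∧ ¬ N.cov.Subdividing v) ∧
    ∃ l : List V, N.cov.IsPathFrom u v l ∧ 2 ≤ l.length ∧
      ∀ w ∈ l.tail.dropLast, N.cov.Subdividing w

/-- `N` is a rooted phylogenetic network on the finite nonempty leaf set `X`. -/
structure IsPhylo (N : Net V) (X : Set V) : Prop where
  finite : N.verts.Finite
  nonempty : X.Nonempty
  arc_mem : ∀ ⦃u v : V⦄, N.arc u v → u ∈ N.verts ∧ v ∈ N.verts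
  acyclic : ∀ ⦃u v : V⦄, N.arc u v → ¬ N.reach v u
  root_mem : N.root ∈ N.verts
  root_inDeg : N.inDeg N.root = 0
  root_unique : ∀ v ∈ N.verts, N.inDeg v = 0 → v = N.root
  leaves_eq : N.leaves = X
  leaf_inDeg : ∀ x ∈ X, N.inDeg x = 1
  interior_deg : ∀ v ∈ N.verts, v ≠ N.root → v ∉ X →
    (N.inDeg v = 1 ∧ 2 ≤ N.outDeg v) ∨ (N.outDeg v = 1 ∧ 2 ≤ N.inDeg v)

/-- `N` has no shortcuts: no arc `(u,v)` such that there is also a directed path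
from `u` to `v` of length at least 2 (i.e. a path-list with at least 3 entries). -/
def NoShortcuts (N : Net V) : Prop :=
  ∀ u v : V, N.arc u v → ¬ ∃ l : List V, N.IsPathFrom u v l ∧ 3 ≤ l.length

/-- Tree-child: every vertex is visible. -/
def TreeChild (N : Net V) : Prop := ∀ v ∈ N.verts, N.Visible v

/-- Normal: tree-child with no shortcuts. -/
def Normal (N : Net V) : Prop := N.TreeChild ∧ N.NoShortcuts

/-- A tree: every vertex has in-degree at most 1. -/
def IsTree (N : Net V) : Prop := ∀ v ∈ N.verts, N.inDeg v ≤ 1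

/-- The cluster of `v`: the set of leaves reachable from `v`. -/
def cluster (N : Net V) (v : V) : Set V := {x ∈ N.leaves | N.reach v x}

/-- The identifying set of `v`: the set of leaves `x` such that every directed
path from the root to `x` passes through `v`. -/
def ident (N : Net V) (v : V) : Set V :=
  {x ∈ N.leaves | ∀ l : List V, N.IsPathFrom N.root x l → v ∈ l}

/-- A digraph isomorphism between two networks, given by the map `f`. -/
def NetEquiv (M : Net V) (M' : Net W) (f : V → W) : Prop :=
  Set.BijOn f M.verts M'.verts ∧
    ∀ u ∈ M.verts, ∀ v ∈ M.verts, (M.arc u v ↔ M'.arc (f u) (f v))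

/-- Two networks over the same ambient type are equivalent relative to a leaf set
`X` if there is a digraph isomorphism between them fixing each element of `X`. -/
def EquivOn (M M' : Net V) (X : Set V) : Prop :=
  ∃ f : V → V, NetEquiv M M' f ∧ ∀ x ∈ X, f x = x

/-- `N₁ ⊕ N₂` : disjoint copies of `N₁` and `N₂` under a new root (`none`). -/
def oplus {V₁ V₂ : Type*} (N₁ : Net V₁) (N₂ : Net V₂) : Net (Option (V₁ ⊕ V₂)) where
  verts := insert none
    ((fun v => some (Sum.inl v)) '' N₁.verts ∪ (fun v => some (Sum.inr v)) '' N₂.verts)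
  root := none
  arc a b :=
    match a, b with
    | none, some (Sum.inl w) => w = N₁.root
    | none, some (Sum.inr w) => w = N₂.root
    | some (Sum.inl u), some (Sum.inl w) => N₁.arc u w
    | some (Sum.inr u), some (Sum.inr w) => N₂.arc u w
    | _, _ => False

/-- `N₁ ⊗ N₂` : identify each leaf `x` of `N₁` with the root of its own copy of `N₂`;
the copy of a non-leaf vertex `u` of `N₁` is `Sum.inl u`, and the vertex `w` of the
copy of `N₂` attached at leaf `x` of `N₁` is `Sum.inr (x, w)`. -/
def otimes {V₁ V₂ : Type*} (N₁ : Net V₁) (N₂ : Net V₂) : Net (V₁ ⊕ V₁ × V₂) where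
  verts := Sum.inl '' (N₁.verts \ N₁.leaves) ∪ Sum.inr '' (N₁.leaves ×ˢ N₂.verts)
  root := Sum.inl N₁.root
  arc a b :=
    match a, b with
    | Sum.inl u, Sum.inl w => N₁.arc u w ∧ w ∉ N₁.leaves
    | Sum.inl u, Sum.inr (x, w) => x ∈ N₁.leaves ∧ N₁.arc u x ∧ w = N₂.root
    | Sum.inr (x, w), Sum.inr (x', w') => x = x' ∧ x ∈ N₁.leaves ∧ N₂.arc w w'
    | _, _ => False

end Net

namespace NetAux

open Net

variable {V : Type*}

lemma reach_of_path (N : Net V) : ∀ (l : List V) (u v : V), N.IsPathFrom u v l → N.reach u v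
  | [], u, v, h => by simp [Net.IsPathFrom] at h
  | [a], u, v, h => by
      obtain ⟨-, h1, h2⟩ := h
      simp only [List.head?_cons, Option.some.injEq] at h1
      simp only [List.getLast?_singleton, Option.some.injEq] at h2
      subst h1; subst h2
      exact Relation.ReflTransGen.refl
  | a :: b :: l, u, v, h => by
      obtain ⟨hc, h1, h2⟩ := h
      rw [List.Chain', List.isChain_cons_cons] at hc
      simp only [List.head?_cons, Option.some.injEq] at h1
      subst h1
      have htail : N.IsPathFrom b v (b :: l) :=
        ⟨hc.2, rfl, by rw [← h2, List.getLast?_cons_cons]⟩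
      exact Relation.ReflTransGen.head hc.1 (reach_of_path N (b :: l) b v htail)

lemma exists_path_of_reach (N : Net V) {u v : V} (h : N.reach u v) :
    ∃ l, N.IsPathFrom u v l := by
  induction h using Relation.ReflTransGen.head_induction_on with
  | refl => exact ⟨[v], List.isChain_singleton v, rfl, rfl⟩
  | head hab _ ih =>
      obtain ⟨l, hc, h1, h2⟩ := ih
      match l, h1 with
      | b :: t, h1 =>
        simp only [List.head?_cons, Option.some.injEq] at h1
        subst h1
        exact ⟨_ :: _ :: t, List.isChain_cons_cons.mpr ⟨hab, hc⟩, rfl,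
          by rw [List.getLast?_cons_cons]; exact h2⟩

lemma two_le_length (N : Net V) {u v : V} {l : List V}
    (h : N.IsPathFrom u v l) (hne : u ≠ v) : 2 ≤ l.length := by
  match l with
  | [] => simp [Net.IsPathFrom] at h
  | [a] =>
      obtain ⟨-, h1, h2⟩ := h
      simp only [List.head?_cons, Option.some.injEq] at h1
      simp only [List.getLast?_singleton, Option.some.injEq] at h2
      exact absurd (h1.symm.trans h2) hne
  | a :: b :: t => simp

lemma path_append (N : Net V) {u w v : V} {l1 l2 : List V}
    (h1 : N.IsPathFrom u w l1) (h2 : N.IsPathFrom w v l2) :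
    N.IsPathFrom u v (l1 ++ l2.tail) := by
  obtain ⟨hc1, hh1, hl1⟩ := h1
  obtain ⟨hc2, hh2, hl2⟩ := h2
  match l2, hh2 with
  | w' :: t, hh2 =>
    simp only [List.head?_cons, Option.some.injEq] at hh2
    subst hh2
    match t with
    | [] =>
        simp only [List.getLast?_singleton, Option.some.injEq] at hl2
        subst hl2
        simpa using ⟨hc1, hh1, hl1⟩
    | c :: t' =>
        refine ⟨?_, ?_, ?_⟩
        · refine List.IsChain.append hc1 (hc2.tail) ?_
          intro x hx y hy
          rw [hl1] at hx
          simp only [Option.mem_def, Option.some.injEq] at hx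
          subst hx
          simp only [List.tail_cons, List.head?_cons, Option.mem_def,
            Option.some.injEq] at hy
          subst hy
          exact (List.isChain_cons_cons.mp hc2).1
        · match l1, hh1 with
          | a :: s, hh1 => simpa using hh1
        · rw [List.getLast?_append]
          rw [List.getLast?_cons_cons] at hl2
          simp [hl2]

lemma not_subdividing {X : Set V} {N : Net V} (hN : N.IsPhylo X) (v : V) :
    ¬ N.Subdividing v := by
  rintro ⟨hin, hout⟩
  by_cases hv : v ∈ N.verts
  · by_cases hroot : v = N.root
    · subst hroot; rw [hN.root_inDeg] at hin; exact one_ne_zero hin.symm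
    · by_cases hleaf : v ∈ X
      · have : N.outDeg v = 0 := by
          have := hN.leaves_eq ▸ hleaf
          exact this.2
        omega
      · rcases hN.interior_deg v hv hroot hleaf with ⟨-, h2⟩ | ⟨-, h2⟩ <;> omega
  · have : {u | N.arc u v} = ∅ := by
      ext u; simp only [Set.mem_setOf_eq, Set.mem_empty_iff_false, iff_false]
      intro h; exact hv (hN.arc_mem h).2
    rw [Net.inDeg, this, Set.ncard_empty] at hin
    exact one_ne_zero hin.symm

lemma cov_eq {X : Set V} {N : Net V} (hN : N.IsPhylo X) (hnorm : N.Normal) :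
    N.cov = N := by
  obtain ⟨htc, hns⟩ := hnorm
  have harc : N.cov.arc = N.arc := by
    funext u v
    apply propext
    constructor
    · rintro ⟨hu, hv, hne, hreach, hno⟩
      rcases hreach.cases_head with rfl | ⟨w, huw, hwv⟩
      · exact absurd rfl hne
      · by_cases hwv' : w = v
        · exact hwv' ▸ huw
        · exfalso
          refine hno ⟨w, htc w (hN.arc_mem huw).2, ?_, hwv',
            Relation.ReflTransGen.single huw, hwv⟩
          rintro rfl
          exact hN.acyclic huw (Relation.ReflTransGen.refl)
    · intro h
      have hu := htc u (hN.arc_mem h).1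
      have hv := htc v (hN.arc_mem h).2
      have hne : u ≠ v := by
        rintro rfl; exact hN.acyclic h Relation.ReflTransGen.refl
      refine ⟨hu, hv, hne, Relation.ReflTransGen.single h, ?_⟩
      rintro ⟨w, hw, hwu, hwv, huw, hwv2⟩
      obtain ⟨l1, hl1⟩ := exists_path_of_reach N huw
      obtain ⟨l2, hl2⟩ := exists_path_of_reach N hwv2
      refine hns u v h ⟨l1 ++ l2.tail, path_append N hl1 hl2, ?_⟩
      have t1 : 2 ≤ l1.length := two_le_length N hl1 (Ne.symm hwu)
      have t2 : 2 ≤ l2.length := two_le_length N hl2 hwv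
      have : l2.tail.length = l2.length - 1 := List.length_tail
      rw [List.length_append]
      omega
  have hverts : N.cov.verts = N.verts := by
    ext v
    exact ⟨fun h => h.1, fun h => htc v h⟩
  show (⟨N.cov.verts, N.cov.root, N.cov.arc⟩ : Net V) = N
  rw [hverts, harc]
  rfl

end NetAux

/-- A hierarchy: a collection of sets any two of which are disjoint or nested. -/
def IsHierarchy {V : Type*} (C : Set (Set V)) : Prop :=
  ∀ A ∈ C, ∀ B ∈ C, A ∩ B = ∅ ∨ A ⊆ B ∨ B ⊆ A

/-- The normalisation `Ñ` of a rooted phylogenetic network `N` equals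
`N` (same vertex set, arc set and root) if and only if `N` is a normal network. -/
theorem stmt7 {V : Type*} (N : Net V) (X : Set V) (hN : N.IsPhylo X) :
    N.normalise = N ↔ N.Normal := by
  constructor
  · intro h
    have hverts : N.normalise.verts = N.verts := by rw [h]
    have harc : N.normalise.arc = N.arc := by rw [h]
    have htc : N.TreeChild := by
      intro v hv
      rw [← hverts] at hv
      exact hv.1
    have hnosub : ∀ w : V, ¬ N.cov.Subdividing w := by
      intro w hsub
      have hw : N.Visible w := by
        have h1 : N.cov.inDeg w = 1 := hsub.1
        have hne : {u | N.cov.arc u w}.Nonempty := by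
          by_contra hh
          rw [Set.not_nonempty_iff_eq_empty] at hh
          rw [Net.inDeg, hh, Set.ncard_empty] at h1
          exact one_ne_zero h1.symm
        obtain ⟨u, hu⟩ := hne
        exact hu.2.1
      have : w ∈ N.normalise.verts := hverts ▸ hw.1
      exact this.2 hsub
    -- every N-arc is a cov-arc
    have hcovarc : ∀ u v : V, N.arc u v → N.cov.arc u v := by
      intro u v huv
      have : N.normalise.arc u v := harc ▸ huv
      obtain ⟨-, -, l, hl, hlen, hint⟩ := this
      have hempty : l.tail.dropLast = [] := by
        by_contra hh
        match hd : l.tail.dropLast with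
        | [] => exact hh hd
        | w :: t =>
            exact hnosub w (hint w (hd ▸ List.mem_cons_self))
      have hlen2 : l.length = 2 := by
        have := congrArg List.length hempty
        simp only [List.length_dropLast, List.length_tail, List.length_nil] at this
        omega
      obtain ⟨a, b, rfl⟩ := List.length_eq_two.mp hlen2
      obtain ⟨hc, hh, hlast⟩ := hl
      simp only [List.head?_cons, Option.some.injEq] at hh
      have hlast' : b = v := by
        simpa [List.getLast?] using hlast
      subst hh; subst hlast'
      exact (List.isChain_cons_cons.mp hc).1
    constructor
    · exact htc
    · rintro u v huv ⟨l, hl, hlen3⟩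
      obtain ⟨-, -, -, -, hno⟩ := hcovarc u v huv
      obtain ⟨hc, hh, hlast⟩ := hl
      obtain ⟨a, t, rfl⟩ : ∃ a t, l = a :: t := by
        cases l with
        | nil => simp at hh
        | cons a t => exact ⟨a, t, rfl⟩
      simp only [List.head?_cons, Option.some.injEq] at hh
      subst hh
      obtain ⟨w, t2, rfl⟩ : ∃ w t2, t = w :: t2 := by
        cases t with
        | nil => simp at hlen3
        | cons w t2 => exact ⟨w, t2, rfl⟩
      rw [List.Chain', List.isChain_cons_cons] at hc
      rw [List.getLast?_cons_cons] at hlast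
      obtain ⟨c, r', rfl⟩ : ∃ c r', t2 = c :: r' := by
        cases t2 with
        | nil => simp at hlen3
        | cons c r' => exact ⟨c, r', rfl⟩
      by_cases hwv : w = v
      · subst hwv
        rw [List.isChain_cons_cons] at hc
        have : N.reach c w := NetAux.reach_of_path N (c :: r') c w
          ⟨hc.2.2, rfl, by rw [← hlast]; exact List.getLast?_cons_cons.symm⟩
        exact hN.acyclic hc.2.1 this
      · have hwvert : w ∈ N.verts := (hN.arc_mem hc.1).2
        have hwvis : N.Visible w := htc w hwvert
        have hwu : w ≠ a := by
          rintro rfl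
          exact hN.acyclic hc.1 Relation.ReflTransGen.refl
        have hreachwv : N.reach w v :=
          NetAux.reach_of_path N (w :: c :: r') w v ⟨hc.2, rfl, hlast⟩
        exact hno ⟨w, hwvis, hwu, hwv, Relation.ReflTransGen.single hc.1, hreachwv⟩
  · intro hnorm
    have hcov : N.cov = N := NetAux.cov_eq hN hnorm
    have hnosub : ∀ v : V, ¬ N.Subdividing v := NetAux.not_subdividing hN
    have hverts : N.normalise.verts = N.verts := by
      ext v
      simp only [Net.normalise, Set.mem_setOf_eq, hcov]
      exact ⟨fun hh => hh.1.1, fun hh => ⟨hnorm.1 v hh, hnosub v⟩⟩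
    have harc : N.normalise.arc = N.arc := by
      funext u v
      apply propext
      simp only [Net.normalise, hcov]
      constructor
      · rintro ⟨-, -, l, hl, hlen, hint⟩
        have hempty : l.tail.dropLast = [] := by
          match hd : l.tail.dropLast with
          | [] => rfl
          | w :: t =>
              exact absurd (hint w (hd ▸ List.mem_cons_self)) (hnosub w)
        have hlen2 : l.length = 2 := by
          have := congrArg List.length hempty
          simp only [List.length_dropLast, List.length_tail, List.length_nil] at this
          omega
        obtain ⟨a, b, rfl⟩ := List.length_eq_two.mp hlen2
        obtain ⟨hc, hh, hlast⟩ := hl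
        simp only [List.head?_cons, Option.some.injEq] at hh
        have hlast' : b = v := by simpa [List.getLast?] using hlast
        subst hh; subst hlast'
        exact (List.isChain_cons_cons.mp hc).1
      · intro h
        have hu := hnorm.1 u (hN.arc_mem h).1
        have hv := hnorm.1 v (hN.arc_mem h).2
        exact ⟨⟨hu, hnosub u⟩, ⟨hv, hnosub v⟩,
          [u, v], ⟨List.isChain_pair.mpr h, rfl, rfl⟩, by simp, by simp⟩
    show (⟨N.normalise.verts, N.normalise.root, N.normalise.arc⟩ : Net V) = N
    rw [hverts, harc]
    rfl
end

section
/- The normalisation function φ on rooted phylogenetic networks on a finite set X is idempotent: for every rooted phylogenetic network N on X, φ(φ(N)) = φ(N). -/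
section Aux
namespace Net

variable {V : Type*}

lemma net_ext {A B : Net V} (h1 : A.verts = B.verts) (h2 : A.root = B.root)
    (h3 : A.arc = B.arc) : A = B := by
  cases A; cases B; simp_all

/-- interior decomposition of list membership -/
lemma mem_decomp {z : V} : ∀ (c : List V), z ∈ c →
    z ∈ c.tail.dropLast ∨ c.head? = some z ∨ c.getLast? = some z := by
  intro c hc
  induction c with
  | nil => simp at hc
  | cons a t ih =>
    rcases List.mem_cons.1 hc with rfl | ht
    · exact Or.inr (Or.inl rfl)
    · match t, ht with
      | b :: t', ht =>
        rcases ih ht with h1 | h2 | h3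
        · left
          show z ∈ (b :: t').dropLast
          match t', h1 with
          | c' :: t'', h1 =>
            simp only [List.dropLast_cons₂] at h1 ⊢
            exact List.mem_cons_of_mem _ h1
        · simp only [List.head?_cons, Option.some.injEq] at h2
          subst h2
          match t' with
          | [] => exact Or.inr (Or.inr (by simp))
          | c' :: t'' => exact Or.inl (by simp [List.dropLast_cons₂])
        · right; right
          rw [List.getLast?_cons_cons]
          exact h3

variable {A : Net V} {a b c z : V} {l l₁ l₂ : List V}

lemma pf_single (A : Net V) (a : V) : A.IsPathFrom a a [a] :=
  ⟨List.isChain_singleton a, rfl, rfl⟩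

lemma pf_pair (h : A.arc a b) : A.IsPathFrom a b [a, b] :=
  ⟨List.isChain_pair.2 h, rfl, rfl⟩

lemma pf_head_mem (h : A.IsPathFrom a b l) : a ∈ l := by
  obtain ⟨-, hh, -⟩ := h
  match l, hh with
  | x :: t, hh => simp only [List.head?_cons, Option.some.injEq] at hh; subst hh; simp

lemma mem_of_getLast?' : ∀ {l : List V} {b : V}, l.getLast? = some b → b ∈ l := by
  intro l
  induction l with
  | nil => intro b h; simp at h
  | cons x t ih =>
    intro b h
    match t with
    | [] =>
      simp only [List.getLast?_singleton, Option.some.injEq] at h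
      simp [h]
    | y :: t' =>
      rw [List.getLast?_cons_cons] at h
      exact List.mem_cons_of_mem _ (ih h)

lemma pf_last_mem (h : A.IsPathFrom a b l) : b ∈ l := by
  obtain ⟨-, -, hl⟩ := h
  exact mem_of_getLast?' hl

lemma pf_head_eq {x : V} {t : List V} (h : A.IsPathFrom a b (x :: t)) : a = x := by
  obtain ⟨-, hh, -⟩ := h
  simp only [List.head?_cons, Option.some.injEq] at hh
  exact hh.symm

lemma pf_cons {x y : V} {t : List V} (h : A.IsPathFrom a b (x :: y :: t)) :
    a = x ∧ A.arc a y ∧ A.IsPathFrom y b (y :: t) := by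
  have hx := pf_head_eq h
  obtain ⟨hc, hh, hl⟩ := h
  subst hx
  replace hc := List.isChain_cons_cons.1 hc
  exact ⟨rfl, hc.1, hc.2, rfl, by rwa [List.getLast?_cons_cons] at hl⟩

lemma pf_singleton {x : V} (h : A.IsPathFrom a b [x]) : a = x ∧ a = b := by
  have hx := pf_head_eq h
  obtain ⟨-, -, hl⟩ := h
  simp only [List.getLast?_singleton, Option.some.injEq] at hl
  exact ⟨hx, hx.trans hl⟩

lemma pf_append (h1 : A.IsPathFrom a b l₁) (h2 : A.IsPathFrom b c l₂) :
    A.IsPathFrom a c (l₁ ++ l₂.tail) := by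
  match l₂ with
  | x :: t =>
    obtain rfl := pf_head_eq h2
    match l₁ with
    | y :: t1 =>
      obtain rfl := pf_head_eq h1
      obtain ⟨hc1, -, hl1⟩ := h1
      obtain ⟨hc2, -, hl2⟩ := h2
      refine ⟨?_, ?_, ?_⟩
      · show List.Chain' A.arc ((a :: t1) ++ t)
        apply List.IsChain.append hc1 (List.IsChain.tail hc2)
        intro x' hx' y' hy'
        rw [hl1] at hx'
        simp only [Option.mem_def, Option.some.injEq] at hx'
        match t, hy' with
        | z :: t', hy' =>
          simp only [List.tail_cons, List.head?_cons, Option.mem_def,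
            Option.some.injEq] at hy'
          rw [← hx', ← hy']
          exact (List.isChain_cons_cons.1 hc2).1
      · simp
      · show ((a :: t1) ++ t).getLast? = some c
        match t with
        | [] =>
          simp only [List.getLast?_singleton, Option.some.injEq] at hl2
          rw [← hl2]
          simpa using hl1
        | z :: t' =>
          rw [List.getLast?_append]
          rw [List.getLast?_cons_cons] at hl2
          rw [hl2]
          rfl

lemma mem_append_tail (h : z ∈ l₁ ++ l₂.tail) : z ∈ l₁ ∨ z ∈ l₂ := by
  rcases List.mem_append.1 h with h | h
  · exact Or.inl h
  · exact Or.inr (List.mem_of_mem_tail h)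

lemma pf_cons_build (h : A.arc a b) (hp : A.IsPathFrom b c l) :
    A.IsPathFrom a c (a :: l) := by
  have h2 := pf_append (pf_pair h) hp
  obtain ⟨-, hh, -⟩ := hp
  match l, hh with
  | x :: t, hh =>
    simp only [List.head?_cons, Option.some.injEq] at hh
    subst hh
    simpa using h2

/-- reach and membership along a path, mapped into reach of a network `N`. -/
lemma pf_reach_trans (N : Net V) (hA : ∀ x y, A.arc x y → N.reach x y) :
    ∀ (l : List V) (a b z : V), A.IsPathFrom a b l → z ∈ l →
      N.reach a z ∧ N.reach z b := by
  intro l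
  induction l with
  | nil => intro a b z h hz; simp at hz
  | cons x t ih =>
    intro a b z h hz
    match t with
    | [] =>
      obtain ⟨rfl, rfl⟩ := pf_singleton h
      simp only [List.mem_singleton] at hz
      subst hz
      exact ⟨Relation.ReflTransGen.refl, Relation.ReflTransGen.refl⟩
    | y :: t' =>
      obtain ⟨rfl, harc, hp⟩ := pf_cons h
      rcases List.mem_cons.1 hz with rfl | hz'
      · refine ⟨Relation.ReflTransGen.refl, ?_⟩
        exact (hA _ _ harc).trans (ih _ b y hp (by simp)).2
      · obtain ⟨h1, h2⟩ := ih _ b z hp hz'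
        exact ⟨(hA _ _ harc).trans h1, h2⟩

lemma pf_reach (N : Net V) (hA : ∀ x y, A.arc x y → N.reach x y)
    (h : A.IsPathFrom a b l) : N.reach a b :=
  (pf_reach_trans N hA l a b b h (pf_last_mem h)).1.trans
    (Relation.ReflTransGen.refl)

lemma pf_of_reach (h : A.reach a b) : ∃ l, A.IsPathFrom a b l := by
  induction h with
  | refl => exact ⟨[a], pf_single A a⟩
  | tail h1 h2 ih =>
    obtain ⟨l, hl⟩ := ih
    exact ⟨l ++ [_], by simpa using pf_append hl (pf_pair h2)⟩

lemma pf_pred (h : A.IsPathFrom a b l) (hz : z ∈ l) (hza : z ≠ a) :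
    ∃ p ∈ l, A.arc p z := by
  induction l generalizing a with
  | nil => simp at hz
  | cons x t ih =>
    match t with
    | [] =>
      obtain ⟨rfl, rfl⟩ := pf_singleton h
      simp only [List.mem_singleton] at hz
      exact absurd hz hza
    | y :: t' =>
      obtain ⟨rfl, harc, hp⟩ := pf_cons h
      rcases List.mem_cons.1 hz with rfl | hz'
      · exact absurd rfl hza
      · by_cases hzy : z = y
        · subst hzy; exact ⟨a, by simp, harc⟩
        · obtain ⟨p, hp1, hp2⟩ := ih hp hz' hzy
          exact ⟨p, by simp [hp1], hp2⟩

lemma pf_succ (h : A.IsPathFrom a b l) (hz : z ∈ l) (hzb : z ≠ b) :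
    ∃ s ∈ l, A.arc z s := by
  induction l generalizing a with
  | nil => simp at hz
  | cons x t ih =>
    match t with
    | [] =>
      obtain ⟨rfl, rfl⟩ := pf_singleton h
      simp only [List.mem_singleton] at hz
      subst hz; exact absurd rfl hzb
    | y :: t' =>
      obtain ⟨rfl, harc, hp⟩ := pf_cons h
      rcases List.mem_cons.1 hz with rfl | hz'
      · exact ⟨y, by simp, harc⟩
      · obtain ⟨s, hs1, hs2⟩ := ih hp hz'
        exact ⟨s, by simp [hs1], hs2⟩

end Net
end Aux
namespace Net
section Phylo

variable {V : Type*} {N : Net V} {X : Set V} (hN : N.IsPhylo X)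
include hN

lemma reach_antisymm (hab : N.reach a b) (hba : N.reach b a) : a = b := by
  rcases Relation.ReflTransGen.cases_head hab with rfl | ⟨c, hac, hcb⟩
  · rfl
  · exact absurd (hcb.trans hba) (hN.acyclic hac)

lemma out_fin (v : V) : {w | N.arc v w}.Finite :=
  hN.finite.subset fun w hw => (hN.arc_mem hw).2

lemma in_fin (v : V) : {u | N.arc u v}.Finite :=
  hN.finite.subset fun u hu => (hN.arc_mem hu).1

lemma reach_of_out0 {v w : V} (h0 : N.outDeg v = 0) (h : N.reach v w) : w = v := by
  rcases Relation.ReflTransGen.cases_head h with rfl | ⟨c, hvc, -⟩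
  · rfl
  · exact absurd hvc (by
      have := (Set.ncard_eq_zero (out_fin hN v)).1 h0
      intro hc
      exact absurd (Set.mem_setOf.2 hc) (by simp [this]))

lemma root_not_in_X : N.root ∉ X := fun h => by
  have h1 := hN.leaf_inDeg _ h
  rw [hN.root_inDeg] at h1
  exact absurd h1 one_ne_zero.symm

lemma in_exists {v : V} (hv : v ∈ N.verts) (hr : v ≠ N.root) : ∃ p, N.arc p v := by
  have h1 : N.inDeg v ≠ 0 := by
    by_cases hx : v ∈ X
    · rw [hN.leaf_inDeg _ hx]; exact one_ne_zero
    · rcases hN.interior_deg v hv hr hx with ⟨h, -⟩ | ⟨-, h⟩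
      · rw [h]; exact one_ne_zero
      · omega
  exact Set.nonempty_of_ncard_ne_zero h1

lemma reach_root : ∀ v ∈ N.verts, N.reach N.root v := by
  have key : ∀ n, ∀ v ∈ N.verts, ({u | N.reach u v} ∩ N.verts).ncard = n →
      N.reach N.root v := by
    intro n
    induction n using Nat.strong_induction_on with
    | _ n ih =>
      intro v hv hn
      by_cases hr : v = N.root
      · subst hr; exact Relation.ReflTransGen.refl
      obtain ⟨p, hp⟩ := in_exists hN hv hr
      have hpv := (hN.arc_mem hp).1
      have hsub : ({u | N.reach u p} ∩ N.verts) ⊂ ({u | N.reach u v} ∩ N.verts) := by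
        constructor
        · rintro u ⟨hu, huv⟩
          exact ⟨hu.trans (Relation.ReflTransGen.single hp), huv⟩
        · intro hss
          have hvmem : v ∈ ({u | N.reach u v} ∩ N.verts) :=
            ⟨Relation.ReflTransGen.refl, hv⟩
          exact hN.acyclic hp (hss hvmem).1
      have hlt := Set.ncard_lt_ncard hsub (hN.finite.subset (Set.inter_subset_right))
      rw [hn] at hlt
      exact (ih _ hlt p hpv rfl).trans (Relation.ReflTransGen.single hp)
  intro v hv
  exact key _ v hv rfl

lemma visible_leaf {x : V} (hx : x ∈ X) : N.Visible x := by
  have hxl : x ∈ N.leaves := hN.leaves_eq ▸ hx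
  exact ⟨hxl.1, x, hxl, fun l hl => pf_last_mem hl⟩

lemma witness {v : V} (hv : N.Visible v) :
    ∃ y ∈ N.leaves, N.reach v y ∧ ∀ l, N.IsPathFrom N.root y l → v ∈ l := by
  obtain ⟨hvm, y, hy, hall⟩ := hv
  obtain ⟨l, hl⟩ := pf_of_reach (reach_root hN y hy.1)
  have hvl := hall l hl
  have := pf_reach_trans N (fun _ _ h => Relation.ReflTransGen.single h) l _ _ v hl hvl
  exact ⟨y, hy, this.2, hall⟩

omit hN in
lemma covarc_reach {a b : V} (h : N.cov.arc a b) : N.reach a b := h.2.2.2.1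

omit hN in
lemma covpf_reach {a b : V} {l : List V} (h : N.cov.IsPathFrom a b l) : N.reach a b :=
  pf_reach N (fun _ _ h => covarc_reach h) h

lemma cov_arcs_in_fin (v : V) : {u | N.cov.arc u v}.Finite :=
  hN.finite.subset fun u hu => hu.1.1

lemma cov_arcs_out_fin (v : V) : {w | N.cov.arc v w}.Finite :=
  hN.finite.subset fun w hw => hw.2.1.1

lemma sub_in_unique {s p q : V} (hs : N.cov.Subdividing s)
    (h1 : N.cov.arc p s) (h2 : N.cov.arc q s) : p = q := by
  obtain ⟨a, ha⟩ := Set.ncard_eq_one.1 hs.1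
  have hp : p ∈ {u | N.cov.arc u s} := h1
  have hq : q ∈ {u | N.cov.arc u s} := h2
  rw [ha] at hp hq
  rw [hp, hq]

lemma sub_out_unique {s p q : V} (hs : N.cov.Subdividing s)
    (h1 : N.cov.arc s p) (h2 : N.cov.arc s q) : p = q := by
  obtain ⟨a, ha⟩ := Set.ncard_eq_one.1 hs.2
  have hp : p ∈ {w | N.cov.arc s w} := h1
  have hq : q ∈ {w | N.cov.arc s w} := h2
  rw [ha] at hp hq
  rw [hp, hq]

lemma sub_in_exists {s : V} (hs : N.cov.Subdividing s) : ∃ p, N.cov.arc p s := by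
  obtain ⟨a, ha⟩ := Set.ncard_eq_one.1 hs.1
  exact ⟨a, show a ∈ {u | N.cov.arc u s} by rw [ha]; rfl⟩

lemma sub_out_exists {s : V} (hs : N.cov.Subdividing s) : ∃ t, N.cov.arc s t := by
  obtain ⟨a, ha⟩ := Set.ncard_eq_one.1 hs.2
  exact ⟨a, show a ∈ {w | N.cov.arc s w} by rw [ha]; rfl⟩

lemma leaf_not_sub {y : V} (hy : y ∈ N.leaves) : ¬ N.cov.Subdividing y := by
  intro hs
  obtain ⟨t, ht⟩ := sub_out_exists hN hs
  exact ht.2.2.1 (reach_of_out0 hN hy.2 (covarc_reach ht)).symm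

end Phylo
end Net
namespace Net
section Phylo2

variable {V : Type*} {N : Net V} {X : Set V} (hN : N.IsPhylo X)
include hN

omit hN in
lemma cov_arc_expand {a b : V} (h : N.cov.arc a b) :
    ∃ L, N.IsPathFrom a b L ∧ ∀ z ∈ L, N.Visible z → z = a ∨ z = b := by
  obtain ⟨hva, hvb, hne, hr, hnm⟩ := h
  obtain ⟨L, hL⟩ := pf_of_reach hr
  refine ⟨L, hL, ?_⟩
  intro z hz hvz
  by_contra hc
  push_neg at hc
  have := pf_reach_trans N (fun _ _ h => Relation.ReflTransGen.single h) L _ _ z hL hz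
  exact hnm ⟨z, hvz, hc.1, hc.2, this.1, this.2⟩

omit hN in
lemma cov_path_expand : ∀ (c : List V) (a b : V), N.cov.IsPathFrom a b c →
    ∃ L, N.IsPathFrom a b L ∧ ∀ z ∈ L, N.Visible z → z ∈ c := by
  intro c
  induction c with
  | nil => intro a b h; exact absurd (pf_head_mem h) (by simp)
  | cons x t ih =>
    intro a b h
    match t with
    | [] =>
      obtain ⟨rfl, rfl⟩ := pf_singleton h
      exact ⟨[a], pf_single N a, fun z hz _ => by simpa using hz⟩
    | y :: t' =>
      obtain ⟨rfl, harc, hp⟩ := pf_cons h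
      obtain ⟨L1, hL1, hm1⟩ := cov_arc_expand harc
      obtain ⟨L2, hL2, hm2⟩ := ih y b hp
      refine ⟨L1 ++ L2.tail, pf_append hL1 hL2, ?_⟩
      intro z hz hvz
      rcases mem_append_tail hz with hz1 | hz2
      · rcases hm1 z hz1 hvz with rfl | rfl
        · simp
        · simp
      · exact List.mem_cons_of_mem _ (hm2 z hz2 hvz)

omit hN in
lemma M_path_expand : ∀ (l : List V) (a b : V), N.normalise.IsPathFrom a b l →
    ∃ L, N.IsPathFrom a b L ∧
      ∀ z ∈ L, N.Visible z → ¬ N.cov.Subdividing z → z ∈ l := by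
  intro l
  induction l with
  | nil => intro a b h; exact absurd (pf_head_mem h) (by simp)
  | cons x t ih =>
    intro a b h
    match t with
    | [] =>
      obtain ⟨rfl, rfl⟩ := pf_singleton h
      exact ⟨[a], pf_single N a, fun z hz _ _ => by simpa using hz⟩
    | y :: t' =>
      obtain ⟨rfl, harc, hp⟩ := pf_cons h
      obtain ⟨-, -, c, hc, hlen, hint⟩ := harc
      obtain ⟨L1, hL1, hm1⟩ := cov_path_expand c a y hc
      obtain ⟨L2, hL2, hm2⟩ := ih y b hp
      refine ⟨L1 ++ L2.tail, pf_append hL1 hL2, ?_⟩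
      intro z hz hvz hnsz
      rcases mem_append_tail hz with hz1 | hz2
      · have hzc := hm1 z hz1 hvz
        rcases mem_decomp c hzc with hin | hh | hl
        · exact absurd (hint z hin) hnsz
        · rw [hc.2.1] at hh
          simp only [Option.some.injEq] at hh
          subst hh; simp
        · rw [hc.2.2] at hl
          simp only [Option.some.injEq] at hl
          subst hl; simp
      · exact List.mem_cons_of_mem _ (hm2 z hz2 hvz hnsz)

lemma cov_path_of_reach :
    ∀ p q : V, N.Visible p → N.Visible q → p ≠ q → N.reach p q →
      ∃ c, N.cov.IsPathFrom p q c := by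
  have key : ∀ n, ∀ p q : V, N.Visible p → N.Visible q → p ≠ q → N.reach p q →
      ({w | N.Visible w ∧ w ≠ p ∧ w ≠ q ∧ N.reach p w ∧ N.reach w q}).ncard = n →
      ∃ c, N.cov.IsPathFrom p q c := by
    intro n
    induction n using Nat.strong_induction_on with
    | _ n ih =>
      intro p q hvp hvq hne hr hn
      by_cases hB : {w | N.Visible w ∧ w ≠ p ∧ w ≠ q ∧ N.reach p w ∧ N.reach w q}.Nonempty
      · obtain ⟨w, hvw, hwp, hwq, hpw, hwq'⟩ := hB
        have hfin : ∀ p' q' : V,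
            {w | N.Visible w ∧ w ≠ p' ∧ w ≠ q' ∧ N.reach p' w ∧ N.reach w q'}.Finite :=
          fun p' q' => hN.finite.subset fun z hz => hz.1.1
        have hsub1 : {z | N.Visible z ∧ z ≠ p ∧ z ≠ w ∧ N.reach p z ∧ N.reach z w} ⊂
            {z | N.Visible z ∧ z ≠ p ∧ z ≠ q ∧ N.reach p z ∧ N.reach z q} := by
          constructor
          · rintro z ⟨h1, h2, h3, h4, h5⟩
            refine ⟨h1, h2, ?_, h4, h5.trans hwq'⟩
            rintro rfl
            exact hwq (reach_antisymm hN hwq' h5)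
          · intro hss
            have := hss ⟨hvw, hwp, hwq, hpw, hwq'⟩
            exact this.2.2.1 rfl
        have hsub2 : {z | N.Visible z ∧ z ≠ w ∧ z ≠ q ∧ N.reach w z ∧ N.reach z q} ⊂
            {z | N.Visible z ∧ z ≠ p ∧ z ≠ q ∧ N.reach p z ∧ N.reach z q} := by
          constructor
          · rintro z ⟨h1, h2, h3, h4, h5⟩
            refine ⟨h1, ?_, h3, hpw.trans h4, h5⟩
            rintro rfl
            exact hwp (reach_antisymm hN h4 hpw)
          · intro hss
            have := hss ⟨hvw, hwp, hwq, hpw, hwq'⟩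
            exact this.2.1 rfl
        have hlt1 := Set.ncard_lt_ncard hsub1 (hfin p q)
        have hlt2 := Set.ncard_lt_ncard hsub2 (hfin p q)
        rw [hn] at hlt1 hlt2
        obtain ⟨c1, hc1⟩ := ih _ hlt1 p w hvp hvw (Ne.symm hwp) hpw rfl
        obtain ⟨c2, hc2⟩ := ih _ hlt2 w q hvw hvq hwq hwq' rfl
        exact ⟨c1 ++ c2.tail, pf_append hc1 hc2⟩
      · refine ⟨[p, q], pf_pair ⟨hvp, hvq, hne, hr, ?_⟩⟩
        rintro ⟨w, h1, h2, h3, h4, h5⟩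
        exact hB ⟨w, h1, h2, h3, h4, h5⟩
  intro p q h1 h2 h3 h4
  exact key _ p q h1 h2 h3 h4 rfl

lemma sub_step {s t z : V} (hs : N.cov.Subdividing s) (hst : N.cov.arc s t)
    (hvz : N.Visible z) (hzs : z ≠ s) (hr : N.reach s z) : N.reach t z := by
  obtain ⟨c, hc⟩ := cov_path_of_reach hN s z hst.1 hvz (Ne.symm hzs) hr
  match c, hc.2.1 with
  | [x], _ =>
    obtain ⟨rfl, rfl⟩ := pf_singleton hc
    exact absurd rfl hzs
  | x :: y :: t', hh =>
    obtain ⟨rfl, harc, hp⟩ := pf_cons hc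
    have hyt := sub_out_unique hN hs harc hst
    subst hyt
    exact covpf_reach hp

lemma chain_prop : ∀ (c : List V) (a b : V), N.cov.IsPathFrom a b c →
    (∀ w ∈ c.dropLast, N.cov.Subdividing w) → ∀ z, N.Visible z →
    z ∉ c.dropLast → N.reach a z → N.reach b z := by
  intro c
  induction c with
  | nil => intro a b h; exact absurd (pf_head_mem h) (by simp)
  | cons x t ih =>
    intro a b h hsub z hvz hzn hr
    match t with
    | [] =>
      obtain ⟨rfl, rfl⟩ := pf_singleton h
      exact hr
    | y :: t' =>
      obtain ⟨rfl, harc, hp⟩ := pf_cons h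
      have hda : (a :: y :: t').dropLast = a :: (y :: t').dropLast := by
        simp [List.dropLast_cons₂]
      rw [hda] at hsub hzn
      have hsa : N.cov.Subdividing a := hsub a (by simp)
      have hza : z ≠ a := fun hc => hzn (by simp [hc])
      have hry := sub_step hN hsa harc hvz hza hr
      exact ih y b hp (fun w hw => hsub w (by simp [hw])) z hvz
        (fun hc => hzn (by simp [hc])) hry

end Phylo2
end Net
namespace Net
section Phylo3

variable {V : Type*} {N : Net V} {X : Set V} (hN : N.IsPhylo X)
include hN

omit hN in
lemma Marc_covpf {a b : V} (h : N.normalise.arc a b) :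
    ∃ c, N.cov.IsPathFrom a b c := by
  obtain ⟨-, -, c, hc, -, -⟩ := h
  exact ⟨c, hc⟩

omit hN in
lemma Marc_reach {a b : V} (h : N.normalise.arc a b) : N.reach a b := by
  obtain ⟨c, hc⟩ := Marc_covpf h
  exact covpf_reach hc

lemma Marc_ne {a b : V} (h : N.normalise.arc a b) : a ≠ b := by
  obtain ⟨-, -, c, hc, hlen, -⟩ := h
  match c, hlen with
  | x :: y :: t, _ =>
    obtain ⟨rfl, harc, hp⟩ := pf_cons hc
    rintro rfl
    exact harc.2.2.1 (reach_antisymm hN (covarc_reach harc) (covpf_reach hp))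

omit hN in
lemma Mreach_reach {a b : V} (h : N.normalise.reach a b) : N.reach a b := by
  induction h with
  | refl => exact Relation.ReflTransGen.refl
  | tail h1 h2 ih => exact ih.trans (Marc_reach h2)

omit hN in
lemma Mreach_covpf {a b : V} (h : N.normalise.reach a b) :
    ∃ c, N.cov.IsPathFrom a b c := by
  induction h with
  | refl => exact ⟨[a], pf_single _ a⟩
  | tail h1 h2 ih =>
      obtain ⟨c1, hc1⟩ := ih
      obtain ⟨c2, hc2⟩ := Marc_covpf h2
      exact ⟨c1 ++ c2.tail, pf_append hc1 hc2⟩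

lemma leaf_M_verts {x : V} (hx : x ∈ X) : x ∈ N.normalise.verts :=
  ⟨visible_leaf hN hx, leaf_not_sub hN (hN.leaves_eq ▸ hx)⟩

lemma leaf_M_leaves {x : V} (hx : x ∈ X) : x ∈ N.normalise.leaves := by
  refine ⟨leaf_M_verts hN hx, ?_⟩
  have h0 : {w | N.normalise.arc x w} = ∅ := by
    ext w
    simp only [Set.mem_setOf_eq, Set.mem_empty_iff_false, iff_false]
    intro hw
    obtain ⟨-, -, c, hc, hlen, -⟩ := hw
    match c, hlen with
    | a :: y :: t, _ =>
      obtain ⟨rfl, harc, -⟩ := pf_cons hc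
      have hxl : x ∈ N.leaves := hN.leaves_eq ▸ hx
      exact harc.2.2.1 (reach_of_out0 hN hxl.2 (covarc_reach harc)).symm
  unfold outDeg
  rw [h0]
  exact Set.ncard_empty V

/-- (I): every vertex of the normalisation is visible in the normalisation. -/
lemma M_visible {v : V} (hv : v ∈ N.normalise.verts) : N.normalise.Visible v := by
  obtain ⟨hvis, hnsub⟩ := hv
  obtain ⟨y, hy, hry, hall⟩ := witness hN hvis
  refine ⟨⟨hvis, hnsub⟩, y, leaf_M_leaves hN (hN.leaves_eq ▸ hy), ?_⟩
  intro l hl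
  obtain ⟨L, hL, hm⟩ := M_path_expand l _ y hl
  exact hm v (hall L hL) hvis hnsub

/-- (II core): no visible vertex of the normalisation strictly between the
endpoints of an arc of the normalisation. -/
lemma M_no_middle {u v : V} (h : N.normalise.arc u v) :
    ¬ ∃ w, N.normalise.Visible w ∧ w ≠ u ∧ w ≠ v ∧
      N.normalise.reach u w ∧ N.normalise.reach w v := by
  rintro ⟨w, hwvis, hwu, hwv, huw, hwv'⟩
  obtain ⟨hwV, hwnsub⟩ := hwvis.1
  obtain ⟨⟨huvis, hunsub⟩, ⟨hvvis, hvnsub⟩, c, hc, hlen, hint⟩ := h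
  have hruw : N.reach u w := Mreach_reach huw
  have hrwv : N.reach w v := Mreach_reach hwv'
  match c, hlen with
  | x :: s :: t, _ =>
    obtain ⟨rfl, harc, hp⟩ := pf_cons hc
    match t with
    | [] =>
      -- cov arc u v directly
      have hsv' := (pf_singleton hp).2
      rw [hsv'] at harc
      exact harc.2.2.2.2 ⟨w, hwV, hwu, hwv, hruw, hrwv⟩
    | z :: t' =>
      -- s is an interior subdividing vertex
      have hint' : ∀ w' ∈ (s :: z :: t').dropLast, N.cov.Subdividing w' := hint
      have hsubs : N.cov.Subdividing s := hint' s (by simp [List.dropLast_cons₂])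
      obtain ⟨yw, hyw, hrsyw, hall⟩ := witness hN harc.2.1
      have hvyw : N.Visible yw := visible_leaf hN (hN.leaves_eq ▸ hyw)
      have hywn : yw ∉ (s :: z :: t').dropLast :=
        fun hc' => leaf_not_sub hN hyw (hint' yw hc')
      have hrvyw : N.reach v yw := chain_prop hN _ s v hp hint' yw hvyw hywn hrsyw
      obtain ⟨D1, hD1⟩ := Mreach_covpf huw
      obtain ⟨D2, hD2⟩ := Mreach_covpf hwv'
      obtain ⟨L1, hL1, hm1⟩ := cov_path_expand D1 u w hD1
      obtain ⟨L2, hL2, hm2⟩ := cov_path_expand D2 w v hD2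
      obtain ⟨L0, hL0⟩ := pf_of_reach (reach_root hN u huvis.1)
      obtain ⟨L3, hL3⟩ := pf_of_reach hrvyw
      have hP : N.IsPathFrom N.root yw (L0 ++ (L1 ++ (L2 ++ L3.tail).tail).tail) :=
        pf_append hL0 (pf_append hL1 (pf_append hL2 hL3))
      have hsP := hall _ hP
      have hvs : N.Visible s := harc.2.1
      have hrs_v : N.reach s v := covpf_reach hp
      have hsu : s ≠ u := (harc.2.2.1).symm
      have hsw : s ≠ w := fun hc' => hwnsub (hc' ▸ hsubs)
      have hsv : s ≠ v := fun hc' => hvnsub (hc' ▸ hsubs)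
      have hNr : ∀ x y : V, N.arc x y → N.reach x y :=
        fun _ _ h => Relation.ReflTransGen.single h
      rcases mem_append_tail hsP with hs0 | hsrest
      · -- s on root → u : contradiction
        have := (pf_reach_trans N hNr L0 _ _ s hL0 hs0).2
        exact hsu (reach_antisymm hN this (covarc_reach harc))
      rcases mem_append_tail hsrest with hs1 | hsrest2
      · -- s on expansion of D1 (u → w)
        have hsD1 := hm1 s hs1 hvs
        have hrsw : N.reach s w :=
          (pf_reach_trans N (fun _ _ h => covarc_reach h) D1 _ _ s hD1 hsD1).2
        have hwn : w ∉ (s :: z :: t').dropLast :=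
          fun hc' => hwnsub (hint' w hc')
        have := chain_prop hN _ s v hp hint' w hwV hwn hrsw
        exact hwv (reach_antisymm hN hrwv this)
      rcases mem_append_tail hsrest2 with hs2 | hs3
      · -- s on expansion of D2 (w → v)
        have hsD2 := hm2 s hs2 hvs
        obtain ⟨p, hpD2, hparc⟩ := pf_pred hD2 hsD2 hsw
        have hpu : p = u := sub_in_unique hN hsubs hparc harc
        have huD2 : u ∈ D2 := hpu ▸ hpD2
        have hrwu : N.reach w u :=
          (pf_reach_trans N (fun _ _ h => covarc_reach h) D2 _ _ u hD2 huD2).1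
        exact hwu (reach_antisymm hN hrwu hruw)
      · -- s on v → yw
        have := (pf_reach_trans N hNr L3 _ _ s hL3 hs3).1
        exact hsv (reach_antisymm hN hrs_v this)

lemma covM_arc_iff (u v : V) : N.normalise.cov.arc u v ↔ N.normalise.arc u v := by
  constructor
  · rintro ⟨hu, hv, hne, hr, hnm⟩
    rcases Relation.ReflTransGen.cases_head hr with rfl | ⟨m, hum, hmv⟩
    · exact absurd rfl hne
    by_cases hmveq : m = v
    · subst hmveq; exact hum
    · exfalso
      exact hnm ⟨m, M_visible hN hum.2.1, (Marc_ne hN hum).symm, hmveq,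
        Relation.ReflTransGen.single hum, hmv⟩
  · intro h
    have hu : u ∈ N.normalise.verts := h.1
    have hv : v ∈ N.normalise.verts := h.2.1
    exact ⟨M_visible hN hu, M_visible hN hv, Marc_ne hN h,
      Relation.ReflTransGen.single h, M_no_middle hN h⟩

end Phylo3
end Net
namespace Net
section Phylo4

variable {V : Type*} {N : Net V} {X : Set V} (hN : N.IsPhylo X)
include hN

lemma sub_forward : ∀ z : V, N.Visible z →
    ∃ q l, N.cov.IsPathFrom z q l ∧ (N.Visible q ∧ ¬ N.cov.Subdividing q) ∧
      ∀ w ∈ l.dropLast, N.cov.Subdividing w := by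
  have key : ∀ n, ∀ z : V, N.Visible z → ({x | N.reach z x} ∩ N.verts).ncard = n →
      ∃ q l, N.cov.IsPathFrom z q l ∧ (N.Visible q ∧ ¬ N.cov.Subdividing q) ∧
        ∀ w ∈ l.dropLast, N.cov.Subdividing w := by
    intro n
    induction n using Nat.strong_induction_on with
    | _ n ih =>
      intro z hvz hn
      by_cases hs : N.cov.Subdividing z
      · obtain ⟨t, ht⟩ := sub_out_exists hN hs
        have hvt : N.Visible t := ht.2.1
        have hsub : ({x | N.reach t x} ∩ N.verts) ⊂ ({x | N.reach z x} ∩ N.verts) := by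
          constructor
          · rintro x ⟨hx, hxv⟩
            exact ⟨(covarc_reach ht).trans hx, hxv⟩
          · intro hss
            have hz : z ∈ ({x | N.reach z x} ∩ N.verts) :=
              ⟨Relation.ReflTransGen.refl, hvz.1⟩
            exact ht.2.2.1 (reach_antisymm hN (covarc_reach ht) (hss hz).1)
        have hlt := Set.ncard_lt_ncard hsub (hN.finite.subset Set.inter_subset_right)
        rw [hn] at hlt
        obtain ⟨q, l, hpf, hq, hsubl⟩ := ih _ hlt t hvt rfl
        refine ⟨q, z :: l, pf_cons_build ht hpf, hq, ?_⟩
        intro w hw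
        cases l with
        | nil => exact absurd (pf_head_mem hpf) (by simp)
        | cons x t' =>
          rw [show (z :: x :: t').dropLast = z :: (x :: t').dropLast from by
            simp [List.dropLast_cons₂]] at hw
          rcases List.mem_cons.1 hw with rfl | hw'
          · exact hs
          · exact hsubl w hw'
      · exact ⟨z, [z], pf_single _ z, ⟨hvz, hs⟩, by simp⟩
  intro z hvz
  exact key _ z hvz rfl

lemma sub_backward : ∀ z : V, N.Visible z →
    ∃ p l, N.cov.IsPathFrom p z l ∧ (N.Visible p ∧ ¬ N.cov.Subdividing p) ∧
      ∀ w ∈ l.tail, N.cov.Subdividing w := by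
  have key : ∀ n, ∀ z : V, N.Visible z → ({x | N.reach x z} ∩ N.verts).ncard = n →
      ∃ p l, N.cov.IsPathFrom p z l ∧ (N.Visible p ∧ ¬ N.cov.Subdividing p) ∧
        ∀ w ∈ l.tail, N.cov.Subdividing w := by
    intro n
    induction n using Nat.strong_induction_on with
    | _ n ih =>
      intro z hvz hn
      by_cases hs : N.cov.Subdividing z
      · obtain ⟨t, ht⟩ := sub_in_exists hN hs
        have hvt : N.Visible t := ht.1
        have hsub : ({x | N.reach x t} ∩ N.verts) ⊂ ({x | N.reach x z} ∩ N.verts) := by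
          constructor
          · rintro x ⟨hx, hxv⟩
            exact ⟨hx.trans (covarc_reach ht), hxv⟩
          · intro hss
            have hz : z ∈ ({x | N.reach x z} ∩ N.verts) :=
              ⟨Relation.ReflTransGen.refl, hvz.1⟩
            exact ht.2.2.1 (reach_antisymm hN (covarc_reach ht) (hss hz).1)
        have hlt := Set.ncard_lt_ncard hsub (hN.finite.subset Set.inter_subset_right)
        rw [hn] at hlt
        obtain ⟨p, l, hpf, hp, hsubl⟩ := ih _ hlt t hvt rfl
        refine ⟨p, l ++ [z], by simpa using pf_append hpf (pf_pair ht), hp, ?_⟩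
        intro w hw
        cases l with
        | nil => exact absurd (pf_head_mem hpf) (by simp)
        | cons x t' =>
          rw [show ((x :: t') ++ [z]).tail = t' ++ [z] from rfl] at hw
          rcases List.mem_append.1 hw with hw' | hw'
          · exact hsubl w hw'
          · rw [List.mem_singleton] at hw'
            subst hw'; exact hs
      · exact ⟨z, [z], pf_single _ z, ⟨hvz, hs⟩, by simp⟩
  intro z hvz
  exact key _ z hvz rfl

end Phylo4
end Net
namespace Net
section Phylo5

variable {V : Type*} {N : Net V} {X : Set V} (hN : N.IsPhylo X)
include hN

lemma out_core {v z1 z2 q : V} {l1 l2 : List V}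
    (h1 : N.cov.arc v z1) (h2 : N.cov.arc v z2) (hne : z1 ≠ z2)
    (pf1 : N.cov.IsPathFrom z1 q l1) (hs1 : ∀ w ∈ l1.dropLast, N.cov.Subdividing w)
    (pf2 : N.cov.IsPathFrom z2 q l2) (hz1q : z1 ≠ q) : False := by
  have hvz1 : N.Visible z1 := h1.2.1
  have hsubz1 : N.cov.Subdividing z1 := by
    cases l1 with
    | nil => exact absurd (pf_head_mem pf1) (by simp)
    | cons x t =>
      cases t with
      | nil => exact absurd (pf_singleton pf1).2 hz1q
      | cons y t' =>
        have hx := (pf_cons pf1).1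
        apply hs1 z1
        simp [List.dropLast_cons₂, hx]
  obtain ⟨y, hy, hrz1y, hall⟩ := witness hN hvz1
  have hvy : N.Visible y := visible_leaf hN (hN.leaves_eq ▸ hy)
  have hrqy : N.reach q y := chain_prop hN l1 z1 q pf1 hs1 y hvy
    (fun hc => leaf_not_sub hN hy (hs1 y hc)) hrz1y
  have pfv2 : N.cov.IsPathFrom v q (v :: l2) := pf_cons_build h2 pf2
  obtain ⟨L1, hL1, hm1⟩ := cov_path_expand (v :: l2) v q pfv2
  obtain ⟨L0, hL0⟩ := pf_of_reach (reach_root hN v h1.1.1)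
  obtain ⟨L3, hL3⟩ := pf_of_reach hrqy
  have hP : N.IsPathFrom N.root y (L0 ++ (L1 ++ L3.tail).tail) :=
    pf_append hL0 (pf_append hL1 hL3)
  have hz1P := hall _ hP
  have hcovr : ∀ x y' : V, N.cov.arc x y' → N.reach x y' := fun _ _ h => covarc_reach h
  have hNr : ∀ x y' : V, N.arc x y' → N.reach x y' :=
    fun _ _ h => Relation.ReflTransGen.single h
  rcases mem_append_tail hz1P with hs0 | hrest
  · have := (pf_reach_trans N hNr L0 _ _ z1 hL0 hs0).2
    exact h1.2.2.1 (reach_antisymm hN (covarc_reach h1) this)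
  rcases mem_append_tail hrest with hsL1 | hsL3
  · have hz1mem := hm1 z1 hsL1 hvz1
    rcases List.mem_cons.1 hz1mem with hc | hc
    · exact h1.2.2.1 hc.symm
    · have hr2z1 : N.reach z2 z1 := (pf_reach_trans N hcovr l2 _ _ z1 pf2 hc).1
      obtain ⟨c', hc'⟩ := cov_path_of_reach hN z2 z1 h2.2.1 hvz1 hne.symm hr2z1
      obtain ⟨p, hpc, hparc⟩ := pf_pred hc' (pf_last_mem hc') hne
      have hpv : p = v := sub_in_unique hN hsubz1 hparc h1
      have hvc' : v ∈ c' := hpv ▸ hpc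
      have hr2v : N.reach z2 v := (pf_reach_trans N hcovr c' _ _ v hc' hvc').1
      exact h2.2.2.1 (reach_antisymm hN (covarc_reach h2) hr2v)
  · have := (pf_reach_trans N hNr L3 _ _ z1 hL3 hsL3).1
    exact hz1q (reach_antisymm hN (covpf_reach pf1) this)

lemma in_core {v z1 z2 p : V} {l1 l2 : List V}
    (h1 : N.cov.arc z1 v) (h2 : N.cov.arc z2 v) (hne : z1 ≠ z2)
    (pf1 : N.cov.IsPathFrom p z1 l1) (hs1 : ∀ w ∈ l1.tail, N.cov.Subdividing w)
    (pf2 : N.cov.IsPathFrom p z2 l2) (hvp : N.Visible p) (hz1p : z1 ≠ p) : False := by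
  have hvz1 : N.Visible z1 := h1.1
  have hsubz1 : N.cov.Subdividing z1 := by
    cases l1 with
    | nil => exact absurd (pf_head_mem pf1) (by simp)
    | cons x t =>
      have hx : p = x := pf_head_eq pf1
      rcases List.mem_cons.1 (pf_last_mem pf1) with hc | hc
      · exact absurd (hc.trans hx.symm) hz1p
      · exact hs1 z1 hc
  obtain ⟨y, hy, hrz1y, hall⟩ := witness hN hvz1
  have hvy : N.Visible y := visible_leaf hN (hN.leaves_eq ▸ hy)
  have hyne : y ≠ z1 := fun hc => leaf_not_sub hN hy (hc ▸ hsubz1)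
  have hrvy : N.reach v y := sub_step hN hsubz1 h1 hvy hyne hrz1y
  have pf2v : N.cov.IsPathFrom p v (l2 ++ [v]) := by
    simpa using pf_append pf2 (pf_pair h2)
  obtain ⟨L1, hL1, hm1⟩ := cov_path_expand (l2 ++ [v]) p v pf2v
  obtain ⟨L0, hL0⟩ := pf_of_reach (reach_root hN p hvp.1)
  obtain ⟨L3, hL3⟩ := pf_of_reach hrvy
  have hP : N.IsPathFrom N.root y (L0 ++ (L1 ++ L3.tail).tail) :=
    pf_append hL0 (pf_append hL1 hL3)
  have hz1P := hall _ hP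
  have hcovr : ∀ x y' : V, N.cov.arc x y' → N.reach x y' := fun _ _ h => covarc_reach h
  have hNr : ∀ x y' : V, N.arc x y' → N.reach x y' :=
    fun _ _ h => Relation.ReflTransGen.single h
  rcases mem_append_tail hz1P with hs0 | hrest
  · have := (pf_reach_trans N hNr L0 _ _ z1 hL0 hs0).2
    exact hz1p (reach_antisymm hN (covpf_reach pf1) this).symm
  rcases mem_append_tail hrest with hsL1 | hsL3
  · have hz1mem := hm1 z1 hsL1 hvz1
    rcases List.mem_append.1 hz1mem with hc | hc
    · have hrz1z2 : N.reach z1 z2 := (pf_reach_trans N hcovr l2 _ _ z1 pf2 hc).2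
      obtain ⟨c', hc'⟩ := cov_path_of_reach hN z1 z2 hvz1 h2.1 hne hrz1z2
      obtain ⟨s, hsc, hsarc⟩ := pf_succ hc' (pf_head_mem hc') hne
      have hsv : s = v := sub_out_unique hN hsubz1 hsarc h1
      have hvc' : v ∈ c' := hsv ▸ hsc
      have hrvz2 : N.reach v z2 := (pf_reach_trans N hcovr c' _ _ v hc' hvc').2
      exact h2.2.2.1 (reach_antisymm hN (covarc_reach h2) hrvz2)
    · rw [List.mem_singleton] at hc
      exact h1.2.2.1 hc
  · have hr := (pf_reach_trans N hNr L3 _ _ z1 hL3 hsL3).1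
    exact h1.2.2.1 (reach_antisymm hN (covarc_reach h1) hr)

end Phylo5
end Net
namespace Net
section Phylo6

variable {V : Type*} {N : Net V} {X : Set V} (hN : N.IsPhylo X)
include hN

lemma mk_M_arc_in {p z v : V} {l : List V}
    (hp : N.Visible p ∧ ¬ N.cov.Subdividing p) (hv : N.Visible v ∧ ¬ N.cov.Subdividing v)
    (h1 : N.cov.arc z v) (pf : N.cov.IsPathFrom p z l)
    (hs : ∀ w ∈ l.tail, N.cov.Subdividing w) : N.normalise.arc p v := by
  cases l with
  | nil => exact absurd (pf_head_mem pf) (by simp)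
  | cons x t =>
    obtain rfl := pf_head_eq pf
    refine ⟨hp, hv, (p :: t) ++ [v], by simpa using pf_append pf (pf_pair h1), by simp, ?_⟩
    intro w hw
    rw [show ((p :: t) ++ [v]).tail.dropLast = (t ++ [v]).dropLast from rfl] at hw
    rw [List.dropLast_concat] at hw
    exact hs w hw

lemma mk_M_arc_out {v z q : V} {l : List V}
    (hv : N.Visible v ∧ ¬ N.cov.Subdividing v) (hq : N.Visible q ∧ ¬ N.cov.Subdividing q)
    (h1 : N.cov.arc v z) (pf : N.cov.IsPathFrom z q l)
    (hs : ∀ w ∈ l.dropLast, N.cov.Subdividing w) : N.normalise.arc v q := by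
  cases l with
  | nil => exact absurd (pf_head_mem pf) (by simp)
  | cons x t =>
    obtain rfl := pf_head_eq pf
    exact ⟨hv, hq, v :: z :: t, pf_cons_build h1 pf, by simp, hs⟩

lemma M_not_both_one {v : V} (hv : v ∈ N.normalise.verts)
    (hin : N.normalise.inDeg v = 1) (hout : N.normalise.outDeg v = 1) : False := by
  obtain ⟨hvis, hnsub⟩ := hv
  apply hnsub
  constructor
  · -- cov in-degree is 1
    obtain ⟨p0, hp0⟩ := Set.ncard_eq_one.1 hin
    have hMp0 : N.normalise.arc p0 v := by
      have h : p0 ∈ {u | N.normalise.arc u v} := by rw [hp0]; rfl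
      exact h
    obtain ⟨c, hc, hlen, -⟩ := hMp0.2.2
    obtain ⟨z0, -, hz0⟩ := pf_pred hc (pf_last_mem hc) (Marc_ne hN hMp0).symm
    have huniq : ∀ z1 z2, N.cov.arc z1 v → N.cov.arc z2 v → z1 = z2 := by
      intro z1 z2 h1 h2
      by_contra hne
      obtain ⟨p1, l1, pf1, hp1, hs1⟩ := sub_backward hN z1 h1.1
      obtain ⟨p2, l2, pf2, hp2, hs2⟩ := sub_backward hN z2 h2.1
      have hM1 := mk_M_arc_in hN hp1 ⟨hvis, hnsub⟩ h1 pf1 hs1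
      have hM2 := mk_M_arc_in hN hp2 ⟨hvis, hnsub⟩ h2 pf2 hs2
      have hp12 : p1 = p2 := by
        have e1 : p1 ∈ {u | N.normalise.arc u v} := hM1
        have e2 : p2 ∈ {u | N.normalise.arc u v} := hM2
        rw [hp0] at e1 e2
        rw [Set.mem_singleton_iff.1 e1, Set.mem_singleton_iff.1 e2]
      subst hp12
      by_cases hq : z1 = p1
      · have hq2 : z2 ≠ p1 := fun hc2 => hne (hq.trans hc2.symm)
        exact in_core hN h2 h1 (Ne.symm hne) pf2 hs2 pf1 hp1.1 hq2
      · exact in_core hN h1 h2 hne pf1 hs1 pf2 hp1.1 hq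
    have hz0m : z0 ∈ {u | N.cov.arc u v} := hz0
    have hset : {u | N.cov.arc u v} = {z0} :=
      Set.eq_singleton_iff_unique_mem.2 ⟨hz0m, fun x hx => huniq x z0 hx hz0⟩
    show ({u | N.cov.arc u v}).ncard = 1
    rw [hset]
    exact Set.ncard_singleton z0
  · -- cov out-degree is 1
    obtain ⟨q0, hq0⟩ := Set.ncard_eq_one.1 hout
    have hMq0 : N.normalise.arc v q0 := by
      have h : q0 ∈ {w | N.normalise.arc v w} := by rw [hq0]; rfl
      exact h
    obtain ⟨c, hc, hlen, -⟩ := hMq0.2.2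
    have hz0 : ∃ z0, N.cov.arc v z0 := by
      match c, hlen with
      | x :: y :: t, _ =>
        obtain ⟨rfl, harc, -⟩ := pf_cons hc
        exact ⟨y, harc⟩
    obtain ⟨z0, hz0⟩ := hz0
    have huniq : ∀ z1 z2, N.cov.arc v z1 → N.cov.arc v z2 → z1 = z2 := by
      intro z1 z2 h1 h2
      by_contra hne
      obtain ⟨q1, l1, pf1, hq1, hs1⟩ := sub_forward hN z1 h1.2.1
      obtain ⟨q2, l2, pf2, hq2, hs2⟩ := sub_forward hN z2 h2.2.1
      have hM1 := mk_M_arc_out hN ⟨hvis, hnsub⟩ hq1 h1 pf1 hs1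
      have hM2 := mk_M_arc_out hN ⟨hvis, hnsub⟩ hq2 h2 pf2 hs2
      have hq12 : q1 = q2 := by
        have e1 : q1 ∈ {w | N.normalise.arc v w} := hM1
        have e2 : q2 ∈ {w | N.normalise.arc v w} := hM2
        rw [hq0] at e1 e2
        rw [Set.mem_singleton_iff.1 e1, Set.mem_singleton_iff.1 e2]
      subst hq12
      by_cases hq : z1 = q1
      · have hq2' : z2 ≠ q1 := fun hc2 => hne (hq.trans hc2.symm)
        exact out_core hN h2 h1 (Ne.symm hne) pf2 hs2 pf1 hq2'
      · exact out_core hN h1 h2 hne pf1 hs1 pf2 hq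
    have hz0m : z0 ∈ {w | N.cov.arc v w} := hz0
    have hset : {w | N.cov.arc v w} = {z0} :=
      Set.eq_singleton_iff_unique_mem.2 ⟨hz0m, fun x hx => huniq x z0 hx hz0⟩
    show ({w | N.cov.arc v w}).ncard = 1
    rw [hset]
    exact Set.ncard_singleton z0

lemma no_sub_covM (w : V) : ¬ N.normalise.cov.Subdividing w := by
  intro hw
  obtain ⟨p, hp⟩ := Set.ncard_eq_one.1 hw.1
  have hparc : N.normalise.cov.arc p w := by
    have h : p ∈ {u | N.normalise.cov.arc u w} := by rw [hp]; rfl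
    exact h
  have hwM : w ∈ N.normalise.verts := hparc.2.1.1
  have hin : N.normalise.inDeg w = 1 := by
    show ({u | N.normalise.arc u w}).ncard = 1
    rw [show {u | N.normalise.arc u w} = {u | N.normalise.cov.arc u w} from
      Set.ext fun u => (covM_arc_iff hN u w).symm]
    exact hw.1
  have hout : N.normalise.outDeg w = 1 := by
    show ({x | N.normalise.arc w x}).ncard = 1
    rw [show {x | N.normalise.arc w x} = {x | N.normalise.cov.arc w x} from
      Set.ext fun x => (covM_arc_iff hN w x).symm]
    exact hw.2
  exact M_not_both_one hN hwM hin hout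

end Phylo6
end Net
/-- The normalisation function `φ` is idempotent: `φ(φ(N)) = φ(N)` for
every rooted phylogenetic network `N`. -/
theorem stmt8 {V : Type*} (N : Net V) (X : Set V) (hN : N.IsPhylo X) :
    N.normalise.normalise = N.normalise := by
  apply Net.net_ext
  · ext v
    constructor
    · rintro ⟨h1, -⟩
      exact h1.1
    · intro hv
      exact ⟨Net.M_visible hN hv, Net.no_sub_covM hN v⟩
  · rfl
  · funext u v
    apply propext
    constructor
    · rintro ⟨-, -, l, hl, hlen, hint⟩
      match l, hlen with
      | x :: y :: t, _ =>
        match t with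
        | [] =>
          obtain ⟨rfl, harc, hp⟩ := Net.pf_cons hl
          rw [(Net.pf_singleton hp).2] at harc
          exact (Net.covM_arc_iff hN u v).1 harc
        | z :: t' =>
          exact absurd (hint y (by simp [List.dropLast_cons₂])) (Net.no_sub_covM hN y)
    · intro h
      have hu : u ∈ N.normalise.verts := h.1
      have hv : v ∈ N.normalise.verts := h.2.1
      exact ⟨⟨Net.M_visible hN hu, Net.no_sub_covM hN u⟩,
        ⟨Net.M_visible hN hv, Net.no_sub_covM hN v⟩,
        [u, v], Net.pf_pair ((Net.covM_arc_iff hN u v).2 h), by simp, by simp⟩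
end

section
/- Let N be a rooted phylogenetic network on a finite set X and let Ñ be its normalisation. For any two vertices u, v of Ñ, there is a directed path from u to v in Ñ if and only if there is a directed path from u to v in N; that is, u ≤_Ñ v if and only if u ≤_N v. -/
namespace Net

section Aux

variable {V : Type*}

/-- Antisymmetry of reachability in an acyclic network. -/
lemma aux_reach_antisymm {N : Net V} (hac : ∀ ⦃u v : V⦄, N.arc u v → ¬ N.reach v u)
    {u v : V} (h1 : N.reach u v) : N.reach v u → u = v := by
  induction h1 using Relation.ReflTransGen.head_induction_on with
  | refl => intro _; rfl
  | head hab hbv _ =>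
    intro h2
    exact absurd (hbv.trans h2) (hac hab)

/-- Reachability stays in the vertex set. -/
lemma aux_reach_mem {N : Net V} (hmem : ∀ ⦃u v : V⦄, N.arc u v → u ∈ N.verts ∧ v ∈ N.verts)
    {u v : V} (h : N.reach u v) (hu : u ∈ N.verts) : v ∈ N.verts := by
  induction h with
  | refl => exact hu
  | tail _ hbc _ => exact (hmem hbc).2

/-- A chain each of whose steps implies reflexive-transitive reachability yields
reachability from the head to the last element. -/
lemma aux_chain_reach {R S : V → V → Prop}
    (h : ∀ a b, R a b → Relation.ReflTransGen S a b) :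
    ∀ l : List V, l.Chain' R → ∀ u v : V, l.head? = some u → l.getLast? = some v →
      Relation.ReflTransGen S u v := by
  intro l
  induction l with
  | nil => simp
  | cons a t ih =>
    cases t with
    | nil =>
      intro _ u v hu hv
      simp only [List.head?_cons, Option.some.injEq] at hu
      simp only [List.getLast?_singleton, Option.some.injEq] at hv
      subst hu; subst hv
      exact Relation.ReflTransGen.refl
    | cons b t' =>
      intro hc u v hu hv
      rw [List.Chain', List.isChain_cons_cons] at hc
      simp only [List.head?_cons, Option.some.injEq] at hu
      subst hu
      rw [List.getLast?_cons_cons] at hv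
      exact (h a b hc.1).trans (ih hc.2 b v rfl hv)

/-- Reachability yields an explicit path list. -/
lemma aux_reach_path {N : Net V} {u v : V} (h : N.reach u v) :
    ∃ l : List V, N.IsPathFrom u v l := by
  induction h using Relation.ReflTransGen.head_induction_on with
  | refl => exact ⟨[v], by simp [IsPathFrom, List.Chain']⟩
  | @head a c hac hcv ih =>
    obtain ⟨l, hc, hh, hl⟩ := ih
    cases l with
    | nil => simp at hh
    | cons c' rest =>
      simp only [List.head?_cons, Option.some.injEq] at hh
      subst hh
      refine ⟨a :: c' :: rest, ?_, by simp, ?_⟩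
      · exact List.isChain_cons_cons.mpr ⟨hac, hc⟩
      · rwa [List.getLast?_cons_cons]

/-- Between two visible vertices, reachability in `N` yields reachability in `Cov(N)`. -/
lemma aux_visible_cov_reach {N : Net V} {X : Set V} (hN : N.IsPhylo X) :
    ∀ n : ℕ, ∀ u v : V, N.Visible u → N.Visible v → N.reach u v →
      {w | N.reach u w ∧ N.reach w v}.ncard ≤ n → N.cov.reach u v := by
  intro n
  induction n with
  | zero =>
    intro u v hu _ huv hcard
    exfalso
    have hsub : {w | N.reach u w ∧ N.reach w v} ⊆ N.verts := fun w hw =>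
      aux_reach_mem hN.arc_mem hw.1 hu.1
    have hfin := hN.finite.subset hsub
    have humem : u ∈ {w | N.reach u w ∧ N.reach w v} := ⟨Relation.ReflTransGen.refl, huv⟩
    have := (Set.ncard_pos hfin).mpr ⟨u, humem⟩
    omega
  | succ n ih =>
    intro u v hu hv huv hcard
    by_cases hne : u = v
    · subst hne; exact Relation.ReflTransGen.refl
    by_cases hmid : ∃ w, N.Visible w ∧ w ≠ u ∧ w ≠ v ∧ N.reach u w ∧ N.reach w v
    · obtain ⟨w, hwvis, hwu, hwv, h1, h2⟩ := hmid
      have hsub : {x | N.reach u x ∧ N.reach x v} ⊆ N.verts := fun x hx =>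
        aux_reach_mem hN.arc_mem hx.1 hu.1
      have hfin := hN.finite.subset hsub
      have hI1 : {x | N.reach u x ∧ N.reach x w} ⊂ {x | N.reach u x ∧ N.reach x v} := by
        have hss : {x | N.reach u x ∧ N.reach x w} ⊆ {x | N.reach u x ∧ N.reach x v} :=
          fun x hx => ⟨hx.1, hx.2.trans h2⟩
        refine (Set.ssubset_iff_of_subset hss).mpr ⟨v, ⟨huv, Relation.ReflTransGen.refl⟩, ?_⟩
        intro hvmem
        exact hwv (aux_reach_antisymm hN.acyclic h2 hvmem.2)
      have hI2 : {x | N.reach w x ∧ N.reach x v} ⊂ {x | N.reach u x ∧ N.reach x v} := by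
        have hss : {x | N.reach w x ∧ N.reach x v} ⊆ {x | N.reach u x ∧ N.reach x v} :=
          fun x hx => ⟨h1.trans hx.1, hx.2⟩
        refine (Set.ssubset_iff_of_subset hss).mpr ⟨u, ⟨Relation.ReflTransGen.refl, huv⟩, ?_⟩
        intro humem
        exact hwu (aux_reach_antisymm hN.acyclic h1 humem.1).symm
      have hc1 : {x | N.reach u x ∧ N.reach x w}.ncard ≤ n := by
        have := Set.ncard_lt_ncard hI1 hfin
        omega
      have hc2 : {x | N.reach w x ∧ N.reach x v}.ncard ≤ n := by
        have := Set.ncard_lt_ncard hI2 hfin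
        omega
      exact (ih u w hu hwvis h1 hc1).trans (ih w v hwvis hv h2 hc2)
    · exact Relation.ReflTransGen.single ⟨hu, hv, hne, huv, hmid⟩

/-- Splitting a list at the first element not satisfying `P`, given the last
element does not satisfy `P`. -/
lemma aux_exists_split {P : V → Prop} :
    ∀ (t : List V) (b v : V), (b :: t).getLast? = some v → ¬ P v →
      ∃ l1 w l2, b :: t = l1 ++ w :: l2 ∧ ¬ P w ∧ ∀ x ∈ l1, P x := by
  intro t
  induction t with
  | nil =>
    intro b v hv hPv
    simp only [List.getLast?_singleton, Option.some.injEq] at hv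
    subst hv
    exact ⟨[], b, [], by simp, hPv, by simp⟩
  | cons c t' ih =>
    intro b v hv hPv
    by_cases hb : P b
    · obtain ⟨l1, w, l2, heq, hw, hall⟩ :=
        ih c v (by rwa [List.getLast?_cons_cons] at hv) hPv
      refine ⟨b :: l1, w, l2, ?_, hw, ?_⟩
      · rw [List.cons_append, ← heq]
      · intro x hx
        rcases List.mem_cons.mp hx with h | h
        · subst h; exact hb
        · exact hall x h
    · exact ⟨[], b, c :: t', rfl, hb, by simp⟩

/-- Compressing a `Cov(N)` path between non-subdividing vertices into
reachability in the normalisation. -/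
lemma aux_compress {N : Net V} :
    ∀ n : ℕ, ∀ l : List V, l.length ≤ n → ∀ u v : V, N.cov.IsPathFrom u v l →
      ¬ N.cov.Subdividing u → ¬ N.cov.Subdividing v → N.normalise.reach u v := by
  intro n
  induction n with
  | zero =>
    intro l hl u v hp _ _
    exfalso
    rw [Nat.le_zero, List.length_eq_zero_iff] at hl
    subst hl
    simp [IsPathFrom] at hp
  | succ n ih =>
    intro l hl u v hp hsu hsv
    obtain ⟨hc, hh, hlast⟩ := hp
    cases l with
    | nil => simp at hh
    | cons a t =>
      simp only [List.head?_cons, Option.some.injEq] at hh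
      subst hh
      cases t with
      | nil =>
        simp only [List.getLast?_singleton, Option.some.injEq] at hlast
        subst hlast
        exact Relation.ReflTransGen.refl
      | cons b t' =>
        rw [List.getLast?_cons_cons] at hlast
        obtain ⟨l1, w, l2, heq, hsw, hall⟩ :=
          aux_exists_split (P := N.cov.Subdividing) t' b v hlast hsv
        have hc' : List.Chain' N.cov.arc ((a :: l1) ++ (w :: l2)) := by
          rw [List.cons_append]; rwa [heq] at hc
        rw [List.Chain', List.isChain_append] at hc'
        obtain ⟨h1, h2, h3⟩ := hc'
        have hnn : a :: l1 ≠ [] := by simp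
        obtain ⟨z, hz⟩ := List.getLast?_isSome.mpr hnn |> Option.isSome_iff_exists.mp
        have harc : N.cov.arc z w := h3 z hz w rfl
        have hvisu : N.Visible a := by
          have : N.cov.arc a b := (List.isChain_cons_cons.mp hc).1
          exact this.1
        have hvisw : N.Visible w := harc.2.1
        have harcuw : N.normalise.arc a w := by
          refine ⟨⟨hvisu, hsu⟩, ⟨hvisw, hsw⟩, (a :: l1) ++ [w], ⟨?_, ?_, ?_⟩, ?_, ?_⟩
          · rw [List.Chain', List.isChain_append]
            exact ⟨h1, List.isChain_singleton w, fun x hx y hy => by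
              simp only [List.head?_cons, Option.mem_def, Option.some.injEq] at hy
              subst hy
              rw [Option.mem_def, hz] at hx
              cases hx
              exact harc⟩
          · simp
          · rw [List.getLast?_append_cons]; rfl
          · simp
          · intro x hx
            apply hall
            simpa [List.dropLast_concat] using hx
        have hlen : (w :: l2).length ≤ n := by
          have h0 : (a :: b :: t').length ≤ n + 1 := hl
          have h1' : (b :: t').length = (l1 ++ w :: l2).length := by rw [heq]
          simp only [List.length_cons, List.length_append] at h0 h1' ⊢
          omega
        have hpath2 : N.cov.IsPathFrom w v (w :: l2) := by
          refine ⟨h2, by simp, ?_⟩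
          rw [heq] at hlast
          rwa [List.getLast?_append_cons] at hlast
        exact Relation.ReflTransGen.head harcuw (ih (w :: l2) hlen w v hpath2 hsw hsv)

/-- An arc of the normalisation yields reachability in `N`. -/
lemma aux_normalise_arc_reach {N : Net V} {u v : V} (h : N.normalise.arc u v) :
    N.reach u v := by
  obtain ⟨_, _, l, hp, _, _⟩ := h
  exact aux_chain_reach (fun a b hab => hab.2.2.2.1) l hp.1 u v hp.2.1 hp.2.2

end Aux

end Net

/-- For any two vertices `u, v` of the normalisation `Ñ`, there is a
directed path from `u` to `v` in `Ñ` iff there is one in `N`: `u ≤_Ñ v ↔ u ≤_N v`. -/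
theorem stmt9 {V : Type*} (N : Net V) (X : Set V) (hN : N.IsPhylo X) :
    ∀ u ∈ N.normalise.verts, ∀ v ∈ N.normalise.verts,
      (N.normalise.reach u v ↔ N.reach u v) := by
  intro u hu v hv
  constructor
  · intro h
    clear hv
    induction h with
    | refl => exact Relation.ReflTransGen.refl
    | tail _ hbc ihr => exact ihr.trans (Net.aux_normalise_arc_reach hbc)
  · intro h
    obtain ⟨hvisu, hsubu⟩ := hu
    obtain ⟨hvisv, hsubv⟩ := hv
    have hcov := Net.aux_visible_cov_reach hN _ u v hvisu hvisv h le_rfl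
    obtain ⟨l, hl⟩ := Net.aux_reach_path hcov
    exact Net.aux_compress _ l le_rfl u v hl hsubu hsubv
end

section
/- Let N be a rooted phylogenetic network on a finite set X and let Ñ be its normalisation. For every vertex v of Ñ, the cluster of v in Ñ equals the cluster of v in N: C_Ñ(v) = C_N(v). -/
namespace Net
variable {V : Type*}

theorem reach_of_path (M : Net V) {u v : V} {l : List V} (h : M.IsPathFrom u v l) :
    M.reach u v := by
  induction l generalizing u with
  | nil => simp [IsPathFrom] at h
  | cons a t ih =>
    obtain ⟨hc, hh, hl⟩ := h
    have ha : a = u := by simpa using hh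
    subst ha
    cases t with
    | nil =>
      have : a = v := by simpa using hl
      subst this; exact Relation.ReflTransGen.refl
    | cons b t' =>
      have harc : M.arc a b := (List.isChain_cons_cons.mp hc).1
      have : M.reach b v := ih ⟨(List.isChain_cons_cons.mp hc).2, rfl, by simpa using hl⟩
      exact Relation.ReflTransGen.head harc this

theorem path_of_reach (M : Net V) {u v : V} (h : M.reach u v) :
    ∃ l, M.IsPathFrom u v l := by
  induction h using Relation.ReflTransGen.head_induction_on with
  | refl => exact ⟨[v], List.isChain_singleton v, rfl, rfl⟩
  | head harc hr ih =>
    obtain ⟨l, hc, hh, hl⟩ := ih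
    refine ⟨_ :: l, List.isChain_cons.mpr ⟨?_, hc⟩, rfl, ?_⟩
    · intro y hy
      rw [hh, Option.mem_def, Option.some.injEq] at hy
      subst hy; exact harc
    · cases l with
      | nil => simp at hh
      | cons c t => simpa using hl

theorem reach_of_mem_path (M : Net V) {u w : V} {l : List V} (h : M.IsPathFrom u w l)
    {v : V} (hv : v ∈ l) : M.reach u v ∧ M.reach v w := by
  obtain ⟨s, t, rfl⟩ := List.append_of_mem hv
  obtain ⟨hc, hh, hl⟩ := h
  have hsplit := List.isChain_append.mp hc
  have h2 : M.reach v w := by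
    refine M.reach_of_path (u := v) (v := w) ⟨hsplit.2.1, rfl, ?_⟩
    rw [← hl, List.getLast?_append_of_ne_nil s (by simp : (v :: t) ≠ [])]
  refine ⟨?_, h2⟩
  cases s with
  | nil =>
    have : v = u := by simpa using hh
    subst this; exact Relation.ReflTransGen.refl
  | cons a s' =>
    have ha : a = u := by simpa using hh
    subst ha
    refine M.reach_of_path (l := (a :: s') ++ [v]) ⟨hc.prefix ⟨t, by simp⟩, rfl, ?_⟩
    exact List.getLast?_concat

end Net

section Phylo
variable {V : Type*} {N : Net V} {X : Set V} (hN : N.IsPhylo X)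
include hN

theorem reach_antisymm {u v : V} (h1 : N.reach u v) (h2 : N.reach v u) : u = v := by
  rcases h1.cases_head with rfl | ⟨a, ha, h3⟩
  · rfl
  · exact absurd (h3.trans h2) (hN.acyclic ha)

theorem mem_verts_of_reach {u v : V} (h : N.reach u v) (h2 : v ∈ N.verts) : u ∈ N.verts := by
  rcases h.cases_head with rfl | ⟨a, ha, _⟩
  · exact h2
  · exact (hN.arc_mem ha).1

theorem reach_root : ∀ v ∈ N.verts, N.reach N.root v := by
  have key : ∀ n : ℕ, ∀ v ∈ N.verts, ({w | N.reach w v ∧ w ≠ v}).ncard ≤ n →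
      N.reach N.root v := by
    intro n
    induction n with
    | zero =>
      intro v hv hcard
      by_cases hroot : v = N.root
      · subst hroot; exact Relation.ReflTransGen.refl
      · exfalso
        have hdeg : N.inDeg v ≠ 0 := fun h0 => hroot (hN.root_unique v hv h0)
        obtain ⟨u, hu⟩ := Set.nonempty_of_ncard_ne_zero hdeg
        have huv : u ∈ {w | N.reach w v ∧ w ≠ v} := by
          refine ⟨Relation.ReflTransGen.single hu, fun h => ?_⟩
          subst h; exact hN.acyclic hu Relation.ReflTransGen.refl
        have hfin : ({w | N.reach w v ∧ w ≠ v}).Finite :=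
          hN.finite.subset (fun w hw => mem_verts_of_reach hN hw.1 hv)
        have : ({w | N.reach w v ∧ w ≠ v}).ncard ≠ 0 :=
          Set.ncard_ne_zero_of_mem huv hfin
        omega
    | succ n ih =>
      intro v hv hcard
      by_cases hroot : v = N.root
      · subst hroot; exact Relation.ReflTransGen.refl
      · have hdeg : N.inDeg v ≠ 0 := fun h0 => hroot (hN.root_unique v hv h0)
        obtain ⟨u, hu⟩ := Set.nonempty_of_ncard_ne_zero hdeg
        have hvnu : v ≠ u := fun h => hN.acyclic hu (h ▸ Relation.ReflTransGen.refl)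
        have hsub : {w | N.reach w u ∧ w ≠ u} ⊂ {w | N.reach w v ∧ w ≠ v} := by
          constructor
          · intro w hw
            refine ⟨hw.1.tail hu, fun h => ?_⟩
            subst h; exact hN.acyclic hu hw.1
          · intro hcon
            have : u ∈ {w | N.reach w u ∧ w ≠ u} := hcon
              ⟨Relation.ReflTransGen.single hu, fun h => hvnu h.symm⟩
            exact this.2 rfl
        have hfin : ({w | N.reach w v ∧ w ≠ v}).Finite :=
          hN.finite.subset (fun w hw => mem_verts_of_reach hN hw.1 hv)
        have hlt := Set.ncard_lt_ncard hsub hfin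
        have := ih u (hN.arc_mem hu).1 (by omega)
        exact this.tail hu
  intro v hv
  exact key _ v hv le_rfl

end Phylo

section Leaves
variable {V : Type*} {N : Net V} {X : Set V} (hN : N.IsPhylo X)
include hN

theorem leaf_no_arc {x : V} (hx : x ∈ N.leaves) : ∀ w, ¬ N.arc x w := by
  have hfin : ({w | N.arc x w}).Finite :=
    hN.finite.subset (fun w hw => (hN.arc_mem hw).2)
  have : {w | N.arc x w} = ∅ := (Set.ncard_eq_zero hfin).mp hx.2
  intro w hw
  exact absurd (show w ∈ {w | N.arc x w} from hw) (by rw [this]; exact not_false.elim ∘ id)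

theorem leaf_reach_eq {x w : V} (hx : x ∈ N.leaves) (h : N.reach x w) : w = x := by
  rcases h.cases_head with rfl | ⟨a, ha, _⟩
  · rfl
  · exact absurd ha (leaf_no_arc hN hx a)

omit hN

theorem leaf_visible {x : V} (hx : x ∈ N.leaves) : N.Visible x := by
  refine ⟨hx.1, x, hx, fun l hl => ?_⟩
  have := hl.2.2
  exact List.mem_of_getLast? this

include hN

theorem leaf_cov_not_sub {x : V} (hx : x ∈ N.leaves) : ¬ N.cov.Subdividing x := by
  intro hsub
  have : {w | N.cov.arc x w} = ∅ := by
    ext w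
    simp only [Set.mem_setOf_eq, Set.mem_empty_iff_false, iff_false]
    intro hw
    exact hw.2.2.1 (leaf_reach_eq hN hx hw.2.2.2.1).symm
  have h0 : N.cov.outDeg x = 0 := by
    rw [Net.outDeg, this, Set.ncard_empty]
  rw [Net.Subdividing] at hsub
  omega

theorem leaf_norm_mem {x : V} (hx : x ∈ N.leaves) : x ∈ N.normalise.verts :=
  ⟨leaf_visible hx, leaf_cov_not_sub hN hx⟩

theorem leaf_norm_leaf {x : V} (hx : x ∈ N.leaves) : x ∈ N.normalise.leaves := by
  refine ⟨leaf_norm_mem hN hx, ?_⟩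
  have : {w | N.normalise.arc x w} = ∅ := by
    ext w
    simp only [Set.mem_setOf_eq, Set.mem_empty_iff_false, iff_false]
    rintro ⟨-, -, l, ⟨hc, hh, hl⟩, h2, -⟩
    match l, h2 with
    | a :: b :: t, _ =>
      have ha : a = x := by simpa using hh
      subst ha
      have harc : N.cov.arc a b := (List.isChain_cons_cons.mp hc).1
      exact harc.2.2.1 (leaf_reach_eq hN hx harc.2.2.2.1).symm
  rw [Net.outDeg, this, Set.ncard_empty]

end Leaves

section Cov
variable {V : Type*} {N : Net V} {X : Set V} (hN : N.IsPhylo X)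
include hN

theorem cov_reach {u x : V} (hu : N.Visible u) (hx : N.Visible x) (hne : u ≠ x)
    (hr : N.reach u x) : Relation.ReflTransGen N.cov.arc u x := by
  classical
  set btw : V → V → Set V :=
    fun u x => {w | N.Visible w ∧ w ≠ u ∧ w ≠ x ∧ N.reach u w ∧ N.reach w x} with hbtw
  have hfin : ∀ u x, (btw u x).Finite :=
    fun u x => hN.finite.subset (fun w hw => hw.1.1)
  have key : ∀ n : ℕ, ∀ u x : V, N.Visible u → N.Visible x → u ≠ x → N.reach u x →
      (btw u x).ncard ≤ n → Relation.ReflTransGen N.cov.arc u x := by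
    intro n
    induction n with
    | zero =>
      intro u x hu hx hne hr hcard
      have hempty : btw u x = ∅ := by
        by_contra hcon
        obtain ⟨w, hw⟩ := Set.nonempty_iff_ne_empty.mpr hcon
        exact Set.ncard_ne_zero_of_mem hw (hfin u x) (le_zero_iff.mp hcard)
      refine Relation.ReflTransGen.single ⟨hu, hx, hne, hr, ?_⟩
      rintro ⟨w, h1, h2, h3, h4, h5⟩
      exact absurd (show w ∈ btw u x from ⟨h1, h2, h3, h4, h5⟩) (by rw [hempty]; simp)
    | succ n ih =>
      intro u x hu hx hne hr hcard
      by_cases hempty : btw u x = ∅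
      · refine Relation.ReflTransGen.single ⟨hu, hx, hne, hr, ?_⟩
        rintro ⟨w, h1, h2, h3, h4, h5⟩
        exact absurd (show w ∈ btw u x from ⟨h1, h2, h3, h4, h5⟩) (by rw [hempty]; simp)
      · obtain ⟨w, hw⟩ := Set.nonempty_iff_ne_empty.mpr hempty
        obtain ⟨hwv, hwu, hwx, hruw, hrwx⟩ := hw
        have hsub1 : btw u w ⊂ btw u x := by
          constructor
          · rintro z ⟨hz1, hz2, hz3, hz4, hz5⟩
            refine ⟨hz1, hz2, fun h => ?_, hz4, hz5.trans hrwx⟩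
            subst h
            exact hwx (reach_antisymm hN hrwx hz5)
          · intro hcon
            exact (hcon ⟨hwv, hwu, hwx, hruw, hrwx⟩).2.2.1 rfl
        have hsub2 : btw w x ⊂ btw u x := by
          constructor
          · rintro z ⟨hz1, hz2, hz3, hz4, hz5⟩
            refine ⟨hz1, fun h => ?_, hz3, hruw.trans hz4, hz5⟩
            subst h
            exact hwu (reach_antisymm hN hz4 hruw)
          · intro hcon
            exact (hcon ⟨hwv, hwu, hwx, hruw, hrwx⟩).2.1 rfl
        have h1 := Set.ncard_lt_ncard hsub1 (hfin u x)
        have h2 := Set.ncard_lt_ncard hsub2 (hfin u x)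
        exact (ih u w hu hwv (Ne.symm hwu) hruw (by omega)).trans
          (ih w x hwv hx hwx hrwx (by omega))
  exact key _ u x hu hx hne hr le_rfl

end Cov

section Chunk
variable {V : Type*} {N : Net V}

theorem first_chunk {u x : V} {l : List V} (hl : N.cov.IsPathFrom u x l)
    (h2 : 2 ≤ l.length) (hu : N.Visible u ∧ ¬ N.cov.Subdividing u)
    (hxs : ¬ N.cov.Subdividing x) :
    ∃ b l', N.normalise.arc u b ∧ N.cov.IsPathFrom b x l' ∧ l'.length < l.length := by
  classical
  obtain ⟨hc, hh, hlast⟩ := hl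
  match l, h2 with
  | a :: t, h2' =>
  have ha : u = a := by symm; simpa using hh
  subst ha
  have htne : t ≠ [] := by
    intro h; subst h; simp at h2'
  set p : V → Bool := fun w => decide (N.cov.Subdividing w) with hp
  have hsplit : t.takeWhile p ++ t.dropWhile p = t := List.takeWhile_append_dropWhile
  have hxmem : x ∈ t := by
    match t, htne with
    | b :: t', _ =>
      have : (b :: t').getLast? = some x := by
        rw [← hlast]; rfl
      exact List.mem_of_getLast? this
  have hdne : t.dropWhile p ≠ [] := by
    intro h
    have := List.dropWhile_eq_nil_iff.mp h x hxmem
    rw [hp] at this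
    exact hxs (of_decide_eq_true this)
  obtain ⟨b, r, hbr⟩ : ∃ b r, t.dropWhile p = b :: r := by
    match h : t.dropWhile p, hdne with
    | b :: r, _ => exact ⟨b, r, rfl⟩
  have hbnsub : ¬ N.cov.Subdividing b := by
    have hne : t.dropWhile p ≠ [] := hdne
    have h1 := List.head_dropWhile_not p hne
    have hh2 : (t.dropWhile p).head? = some b := by rw [hbr]; rfl
    rw [List.head?_eq_head hne] at hh2
    have h3 : (t.dropWhile p).head hne = b := by injection hh2
    rw [h3] at h1
    simp only [hp] at h1
    simpa using h1
  set s : List V := t.takeWhile p with hs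
  have hssub : ∀ w ∈ s, N.cov.Subdividing w := by
    intro w hw
    have := List.mem_takeWhile_imp hw
    rw [hp] at this
    exact of_decide_eq_true this
  have hteq : t = s ++ b :: r := by rw [hs, ← hbr, hsplit]
  have hceq : List.Chain' N.cov.arc ((u :: s) ++ (b :: r)) := by
    rw [List.cons_append] at *
    rw [← hteq]; exact hc
  have hparts := List.isChain_append.mp hceq
  have hvisb : N.Visible b := by
    have hgl : (u :: s).getLast? = some ((u :: s).getLast (by simp)) :=
      List.getLast?_eq_getLast _
    have harc : N.cov.arc ((u :: s).getLast (by simp)) b :=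
      hparts.2.2 _ hgl b rfl
    exact harc.2.1
  refine ⟨b, b :: r, ⟨hu, ⟨hvisb, hbnsub⟩, (u :: s) ++ [b], ⟨?_, ?_, ?_⟩, ?_, ?_⟩,
    ⟨hparts.2.1, rfl, ?_⟩, ?_⟩
  · refine hceq.prefix ⟨r, ?_⟩
    simp
  · simp
  · exact List.getLast?_concat
  · simp
  · intro w hw
    apply hssub
    simpa [List.dropLast_concat] using hw
  · rw [← hlast]
    have : u :: t = (u :: s) ++ (b :: r) := by rw [hteq]; simp
    rw [this, List.getLast?_append_of_ne_nil _ (by simp)]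
  · have : t.length = s.length + (b :: r).length := by
      rw [hteq]; simp
    simp only [List.length_cons] at *
    omega

end Chunk

section Main
variable {V : Type*} {N : Net V} {X : Set V} (hN : N.IsPhylo X)

theorem norm_reach_of_cov_path :
    ∀ n : ℕ, ∀ l : List V, ∀ u x : V, l.length ≤ n → N.cov.IsPathFrom u x l →
      (N.Visible u ∧ ¬ N.cov.Subdividing u) → ¬ N.cov.Subdividing x →
      N.normalise.reach u x := by
  intro n
  induction n with
  | zero =>
    intro l u x hlen hl _ _
    cases l with
    | nil => simp [Net.IsPathFrom] at hl
    | cons a t => simp at hlen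
  | succ n ih =>
    intro l u x hlen hl hu hx
    by_cases h1 : 2 ≤ l.length
    · obtain ⟨b, l', harc, hl', hlt⟩ := first_chunk hl h1 hu hx
      have hb : N.Visible b ∧ ¬ N.cov.Subdividing b := harc.2.1
      exact Relation.ReflTransGen.head harc (ih l' b x (by omega) hl' hb hx)
    · match l, hl with
      | [a], hl =>
        have h2 : a = u := by simpa using hl.2.1
        have h3 : a = x := by simpa using hl.2.2
        subst h2; subst h3
        exact Relation.ReflTransGen.refl
      | [], hl => simp [Net.IsPathFrom] at hl
      | a :: b :: t, hl => simp at h1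

include hN

theorem norm_leaves_eq : N.normalise.leaves = N.leaves := by
  ext v
  constructor
  · rintro ⟨⟨hvis, hnsub⟩, hdeg⟩
    by_contra hnl
    obtain ⟨hvV, y, hy, hvy⟩ := hvis
    have hvney : v ≠ y := by
      rintro rfl; exact hnl hy
    have hry : N.reach N.root y := reach_root hN y hy.1
    obtain ⟨l, hl⟩ := N.path_of_reach hry
    have hvmem : v ∈ l := hvy l hl
    have hrvy : N.reach v y := (N.reach_of_mem_path hl hvmem).2
    have hcov := cov_reach hN ⟨hvV, y, hy, hvy⟩ (leaf_visible hy) hvney hrvy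
    obtain ⟨l₂, hl₂⟩ := N.cov.path_of_reach hcov
    have hlen2 : 2 ≤ l₂.length := by
      match l₂, hl₂ with
      | [], hl₂ => simp [Net.IsPathFrom] at hl₂
      | [a], hl₂ =>
        exfalso
        have h2 : a = v := by simpa using hl₂.2.1
        have h3 : a = y := by simpa using hl₂.2.2
        exact hvney (h2 ▸ h3)
      | a :: b :: t, _ => simp
    obtain ⟨b, l', harc, -, -⟩ :=
      first_chunk hl₂ hlen2 ⟨⟨hvV, y, hy, hvy⟩, hnsub⟩ (leaf_cov_not_sub hN hy)
    have hfin : ({w | N.normalise.arc v w}).Finite :=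
      hN.finite.subset (fun w hw => hw.2.1.1.1)
    have hempty : {w | N.normalise.arc v w} = ∅ := (Set.ncard_eq_zero hfin).mp hdeg
    exact absurd (show b ∈ {w | N.normalise.arc v w} from harc) (by rw [hempty]; simp)
  · exact fun hv => leaf_norm_leaf hN hv

omit hN

theorem reach_of_norm_reach {u v : V} (h : N.normalise.reach u v) : N.reach u v := by
  have harc : ∀ a b : V, N.normalise.arc a b → N.reach a b := by
    rintro a b ⟨-, -, l, hl, -, -⟩
    have hcov : Relation.ReflTransGen N.cov.arc a b := N.cov.reach_of_path hl
    have : Relation.ReflTransGen N.reach a b :=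
      Relation.ReflTransGen.mono (fun p q (hpq : N.cov.arc p q) => hpq.2.2.2.1) _ _ hcov
    rwa [Net.reach, ← Relation.reflTransGen_idem (r := N.arc)]
  have : Relation.ReflTransGen N.reach u v :=
    Relation.ReflTransGen.mono harc _ _ h
  rwa [Net.reach, ← Relation.reflTransGen_idem (r := N.arc)]

end Main

/-- For every vertex `v` of the normalisation `Ñ`, the cluster of `v`
in `Ñ` equals the cluster of `v` in `N`. -/
theorem stmt10 {V : Type*} (N : Net V) (X : Set V) (hN : N.IsPhylo X) :
    ∀ v ∈ N.normalise.verts, N.normalise.cluster v = N.cluster v := by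
  intro v hv
  ext x
  constructor
  · rintro ⟨hxl, hr⟩
    exact ⟨(norm_leaves_eq hN) ▸ hxl, reach_of_norm_reach hr⟩
  · rintro ⟨hxl, hr⟩
    refine ⟨(norm_leaves_eq hN).symm ▸ hxl, ?_⟩
    by_cases hne : v = x
    · subst hne; exact Relation.ReflTransGen.refl
    · have hcov := cov_reach hN hv.1 (leaf_visible hxl) hne hr
      obtain ⟨l, hl⟩ := (Net.cov N).path_of_reach hcov
      exact norm_reach_of_cov_path l.length l v x le_rfl hl hv (leaf_cov_not_sub hN hxl)
end
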